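/- arXiv:1510.05434 — 10 statements merged into one kernel-verified Lean document; each statement's English description precedes it below -/
import Mathlib

section
/- The number of inversion sequences of length n avoiding the pattern 012 equals the Fibonacci number F_{2n-1} (with F_1 = F_2 = 1). -/
def Dset (m a : ℕ) : Set (Fin m → ℕ) :=
  {g | (∀ i : Fin m, g i + (i : ℕ) ≤ m) ∧
       (∀ i j : Fin m, i < j → 0 < g i → 0 < g j → g i ≤ g j) ∧
       (∀ i : Fin m, 0 < g i → a ≤ g i)}

lemma fib_odd_sum (N : ℕ) :
    ∑ t ∈ Finset.range N, Nat.fib (2 * t + 1) = Nat.fib (2 * N) := by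
  induction N with
  | zero => simp
  | succ n ih =>
      rw [Finset.sum_range_succ, ih]
      have h2n : 2 * (n + 1) = 2 * n + 2 := by ring
      rw [h2n, Nat.fib_add_two]

def Dslice (m a v : ℕ) : Set (Fin (m + 1) → ℕ) :=
  {g | g ∈ Dset (m + 1) a ∧ g 0 = v}

lemma tail_image_slice (m a v : ℕ) (hv : v = 0 ∨ (a ≤ v ∧ v ≤ m + 1)) :
    Fin.tail '' Dslice m a v = Dset m (max a v) := by
  ext h
  constructor
  · rintro ⟨g, ⟨⟨hb, hm, hc⟩, h0⟩, rfl⟩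
    refine ⟨?_, ?_, ?_⟩
    · intro i
      have := hb i.succ
      show g i.succ + (i : ℕ) ≤ m
      simp only [Fin.val_succ] at this
      omega
    · intro i j hij hi hj
      exact hm i.succ j.succ (Fin.succ_lt_succ_iff.mpr hij) hi hj
    · intro i hi
      refine max_le (hc i.succ hi) ?_
      rcases Nat.eq_zero_or_pos v with rfl | hvpos
      · exact Nat.zero_le _
      · have : g 0 ≤ g i.succ := hm 0 i.succ i.succ_pos (h0 ▸ hvpos) hi
        exact h0 ▸ this
  · rintro ⟨hb, hm, hc⟩
    refine ⟨Fin.cons v h, ⟨⟨?_, ?_, ?_⟩, by simp⟩, by simp [Fin.tail_cons]⟩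
    · intro i
      refine Fin.cases ?_ ?_ i
      · simpa using hv.elim (fun h0 => h0 ▸ Nat.zero_le _) fun hh => hh.2
      · intro i'
        have := hb i'
        simp only [Fin.cons_succ, Fin.val_succ]
        omega
    · intro i j hij hi hj
      revert hij hi hj
      refine Fin.cases ?_ (fun j' => ?_) j <;> refine Fin.cases ?_ (fun i' => ?_) i <;>
        intro hij hi hj
      · exact absurd hij (lt_irrefl _)
      · exact absurd hij (Fin.not_lt_zero _)
      · simp only [Fin.cons_zero, Fin.cons_succ] at *
        exact le_trans (le_max_right a v) (hc j' hj)
      · simp only [Fin.cons_succ] at *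
        exact hm i' j' (Fin.succ_lt_succ_iff.mp hij) hi hj
    · intro i
      refine Fin.cases ?_ ?_ i
      · intro hpos
        simp only [Fin.cons_zero] at hpos ⊢
        rcases hv with rfl | ⟨h1, _⟩
        · omega
        · exact h1
      · intro i' hpos
        simp only [Fin.cons_succ] at hpos ⊢
        exact le_trans (le_max_left a v) (hc i' hpos)

lemma Dfin (m a : ℕ) : (Dset m a).Finite := by
  apply Set.Finite.subset (Set.Finite.pi (fun i : Fin m => Set.finite_Iic m))
  intro g hg
  simp only [Set.mem_pi, Set.mem_univ, Set.mem_Iic, forall_true_left]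
  intro i
  exact le_trans (Nat.le_add_right _ _) (hg.1 i)

lemma Dslice_fin (m a v : ℕ) : (Dslice m a v).Finite :=
  (Dfin (m + 1) a).subset fun g hg => hg.1

lemma ncard_slice (m a v : ℕ) (hv : v = 0 ∨ (a ≤ v ∧ v ≤ m + 1)) :
    (Dslice m a v).ncard = (Dset m (max a v)).ncard := by
  rw [← tail_image_slice m a v hv]
  refine (Set.ncard_image_of_injOn ?_).symm
  intro g hg g' hg' htail
  funext i
  refine Fin.cases ?_ (fun i' => ?_) i
  · rw [hg.2, hg'.2]
  · exact congrFun htail i'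

lemma Esum (m : ℕ) : ∀ k a : ℕ, 1 ≤ a → m + 2 ≤ a + k →
    {g | g ∈ Dset (m + 1) a ∧ g 0 ≠ 0}.ncard =
      ∑ v ∈ Finset.Icc a (m + 1), (Dset m v).ncard := by
  intro k
  induction k with
  | zero =>
      intro a ha hk
      have h1 : {g | g ∈ Dset (m + 1) a ∧ g 0 ≠ 0} = (∅ : Set (Fin (m + 1) → ℕ)) := by
        ext g
        simp only [Set.mem_setOf_eq, Set.mem_empty_iff_false, iff_false, not_and]
        intro hg hne
        have hb := hg.1 0
        have hc := hg.2.2 0 (Nat.pos_of_ne_zero hne)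
        simp at hb
        omega
      have h2 : Finset.Icc a (m + 1) = ∅ := Finset.Icc_eq_empty (by omega)
      rw [h1, h2]
      simp
  | succ k ih =>
      intro a ha hk
      by_cases hle : m + 2 ≤ a + k
      · exact ih a ha hle
      · have ham : a ≤ m + 1 := by omega
        have hsplit : {g | g ∈ Dset (m + 1) a ∧ g 0 ≠ 0} =
            Dslice m a a ∪ {g | g ∈ Dset (m + 1) (a + 1) ∧ g 0 ≠ 0} := by
          ext g
          simp only [Set.mem_setOf_eq, Set.mem_union, Dslice]
          constructor
          · rintro ⟨hg, h0⟩
            have h0a : a ≤ g 0 := hg.2.2 0 (Nat.pos_of_ne_zero h0)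
            rcases eq_or_lt_of_le h0a with heq | hlt
            · exact Or.inl ⟨hg, heq.symm⟩
            · refine Or.inr ⟨⟨hg.1, hg.2.1, ?_⟩, h0⟩
              intro i hi
              rcases Nat.eq_zero_or_pos (i : ℕ) with hi0 | hipos
              · have hi00 : i = 0 := Fin.ext hi0
                rw [hi00]
                rw [hi00] at hi
                omega
              · have : g 0 ≤ g i := hg.2.1 0 i (by exact Fin.mk_lt_mk.mpr hipos) (by omega) hi
                omega
          · rintro (⟨hg, h0⟩ | ⟨hg, h0⟩)
            · exact ⟨hg, by omega⟩
            · exact ⟨⟨hg.1, hg.2.1, fun i hi => le_trans (Nat.le_succ a) (hg.2.2 i hi)⟩, h0⟩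
        have hdisj : Disjoint (Dslice m a a) {g | g ∈ Dset (m + 1) (a + 1) ∧ g 0 ≠ 0} := by
          rw [Set.disjoint_left]
          rintro g ⟨_, h0⟩ ⟨hg, hne⟩
          have := hg.2.2 0 (Nat.pos_of_ne_zero hne)
          omega
        rw [hsplit, Set.ncard_union_eq hdisj (Dslice_fin m a a)
          (((Dfin (m + 1) (a + 1)).subset fun g hg => hg.1)),
          ncard_slice m a a (Or.inr ⟨le_refl a, ham⟩), ih (a + 1) (by omega) (by omega)]
        have : Finset.Icc a (m + 1) = insert a (Finset.Icc (a + 1) (m + 1)) := by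
          ext x
          simp only [Finset.mem_Icc, Finset.mem_insert]
          omega
        rw [this, Finset.sum_insert (by simp), max_self]

lemma Drec (m a : ℕ) (ha : 1 ≤ a) :
    (Dset (m + 1) a).ncard =
      (Dset m a).ncard + ∑ v ∈ Finset.Icc a (m + 1), (Dset m v).ncard := by
  have hsplit : Dset (m + 1) a = Dslice m a 0 ∪ {g | g ∈ Dset (m + 1) a ∧ g 0 ≠ 0} := by
    ext g
    simp only [Dslice, Set.mem_union, Set.mem_setOf_eq]
    by_cases h0 : g 0 = 0 <;> tauto
  have hdisj : Disjoint (Dslice m a 0) {g | g ∈ Dset (m + 1) a ∧ g 0 ≠ 0} := by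
    rw [Set.disjoint_left]
    rintro g ⟨_, h0⟩ ⟨_, hne⟩
    exact hne h0
  rw [hsplit, Set.ncard_union_eq hdisj (Dslice_fin m a 0)
      ((Dfin (m + 1) a).subset fun g hg => hg.1),
    ncard_slice m a 0 (Or.inl rfl), Esum m (m + 2) a ha (by omega)]
  rw [Nat.max_eq_left (Nat.zero_le a)]

lemma Dcard : ∀ m a : ℕ, 1 ≤ a → (Dset m a).ncard = Nat.fib (2 * (m + 1 - a) + 1) := by
  intro m
  induction m with
  | zero =>
      intro a ha
      have h1 : Dset 0 a = Set.univ := by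
        ext g
        simp only [Dset, Set.mem_setOf_eq, Set.mem_univ, iff_true]
        exact ⟨fun i => i.elim0, fun i => i.elim0, fun i => i.elim0⟩
      have h2 : 0 + 1 - a = 0 := by omega
      rw [h1, Set.ncard_univ, h2]
      simp [Nat.card_unique]
  | succ m ih =>
      intro a ha
      rw [Drec m a ha, ih a ha]
      have hsum : ∑ v ∈ Finset.Icc a (m + 1), (Dset m v).ncard =
          ∑ v ∈ Finset.Icc a (m + 1), Nat.fib (2 * (m + 1 - v) + 1) := by
        refine Finset.sum_congr rfl fun v hv => ?_
        exact ih v (le_trans ha (Finset.mem_Icc.mp hv).1)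
      rw [hsum]
      by_cases ham : a ≤ m + 1
      · have hIcc : Finset.Icc a (m + 1) = Finset.Ico a (m + 2) := by
          exact (Finset.Ico_add_one_right_eq_Icc (a := a) (b := m + 1)).symm
        rw [hIcc, Finset.sum_Ico_eq_sum_range]
        have hN : m + 2 - a = (m + 1 - a) + 1 := by omega
        have hre : ∀ t ∈ Finset.range (m + 2 - a),
            Nat.fib (2 * (m + 1 - (a + t)) + 1) =
              Nat.fib (2 * ((m + 2 - a) - 1 - t) + 1) := by
          intro t ht
          congr 2
          simp only [Finset.mem_range] at ht
          omega
        rw [Finset.sum_congr rfl hre, Finset.sum_range_reflect (fun t => Nat.fib (2 * t + 1)),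
          fib_odd_sum]
        have h1 : m + 1 + 1 - a = (m + 1 - a) + 1 := by omega
        rw [h1]
        have e1 : 2 * ((m + 1 - a) + 1) = 2 * (m + 1 - a) + 1 + 1 := by ring
        rw [e1]
        exact (Nat.fib_add_two).symm
      · have hIcc : Finset.Icc a (m + 1) = ∅ := Finset.Icc_eq_empty (by omega)
        rw [hIcc]
        have h1 : m + 1 + 1 - a = 0 := by omega
        have h2 : m + 1 - a = 0 := by omega
        rw [h1, h2]
        simp

/-- The number of inversion sequences of length `n` avoiding the pattern 012
equals the Fibonacci number `F_{2n-1}` (with `F_1 = F_2 = 1`). -/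
theorem inv_avoid_012_eq_fib (n : ℕ) (hn : 1 ≤ n) :
    Set.ncard {e : Fin n → ℕ | (∀ i : Fin n, e i ≤ (i : ℕ)) ∧
      ¬ ∃ i j k : Fin n, i < j ∧ j < k ∧ e i < e j ∧ e j < e k} =
    Nat.fib (2 * n - 1) := by
  set T : Set (Fin n → ℕ) := {e | (∀ i : Fin n, e i ≤ (i : ℕ)) ∧
      ∀ j k : Fin n, j < k → 0 < e j → 0 < e k → e k ≤ e j} with hT
  have hST : {e : Fin n → ℕ | (∀ i : Fin n, e i ≤ (i : ℕ)) ∧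
      ¬ ∃ i j k : Fin n, i < j ∧ j < k ∧ e i < e j ∧ e j < e k} = T := by
    ext e
    simp only [hT, Set.mem_setOf_eq]
    refine and_congr_right fun hb => ?_
    constructor
    · intro hno j k hjk hj hk
      by_contra hlt
      push_neg at hlt
      have hj0 : (j : ℕ) ≠ 0 := by
        intro h0
        have := hb j
        omega
      have h0n : (0 : ℕ) < n := hn
      refine hno ⟨⟨0, h0n⟩, j, k, ?_, hjk, ?_, hlt⟩
      · rw [Fin.lt_def]
        exact Nat.pos_of_ne_zero hj0
      · have : e ⟨0, h0n⟩ ≤ 0 := hb ⟨0, h0n⟩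
        omega
    · rintro hmono ⟨i, j, k, hij, hjk, h1, h2⟩
      have hj : 0 < e j := by omega
      have hk : 0 < e k := by omega
      have := hmono j k hjk hj hk
      omega
  rw [hST]
  -- the reversing map
  have hlt1 : ∀ i : Fin (n - 1), n - 1 - (i : ℕ) < n := fun i => by
    have := i.isLt; omega
  set φ : (Fin n → ℕ) → (Fin (n - 1) → ℕ) :=
    fun e i => e ⟨n - 1 - (i : ℕ), hlt1 i⟩ with hφ
  have hinj : Set.InjOn φ T := by
    intro e he e' he' heq
    funext j
    by_cases hj0 : (j : ℕ) = 0
    · have h1 : e j ≤ (j : ℕ) := he.1 j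
      have h2 : e' j ≤ (j : ℕ) := he'.1 j
      omega
    · have hjlt : n - 1 - ((n : ℕ) - 1 - (j : ℕ)) = (j : ℕ) := by
        have := j.isLt; omega
      have hi : (n : ℕ) - 1 - (j : ℕ) < n - 1 := by have := j.isLt; omega
      have := congrFun heq ⟨n - 1 - (j : ℕ), hi⟩
      simp only [hφ] at this
      have hidx : (⟨n - 1 - (n - 1 - (j : ℕ)), hlt1 ⟨n - 1 - (j : ℕ), hi⟩⟩ : Fin n) = j :=
        Fin.ext (by simpa using hjlt)
      rwa [hidx] at this
  have himg : φ '' T = Dset (n - 1) 1 := by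
    ext h
    constructor
    · rintro ⟨e, ⟨hb, hm⟩, rfl⟩
      refine ⟨?_, ?_, fun i hi => hi⟩
      · intro i
        have h1 : e ⟨n - 1 - (i : ℕ), hlt1 i⟩ ≤ n - 1 - (i : ℕ) := hb _
        have := i.isLt
        simp only [hφ]
        omega
      · intro i j hij hi hj
        have hij' : (⟨n - 1 - (j : ℕ), hlt1 j⟩ : Fin n) < ⟨n - 1 - (i : ℕ), hlt1 i⟩ := by
          have hi2 := i.isLt
          have hj2 := j.isLt
          exact Fin.mk_lt_mk.mpr (by have : (i : ℕ) < (j : ℕ) := hij; omega)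
        exact hm _ _ hij' hj hi
    · rintro ⟨hb, hm, _⟩
      set e : Fin n → ℕ := fun j =>
        if hj : (j : ℕ) = 0 then 0
        else h ⟨n - 1 - (j : ℕ), by have := j.isLt; omega⟩ with he
      have heval : ∀ (j : Fin n) (hj : (j : ℕ) ≠ 0),
          e j = h ⟨n - 1 - (j : ℕ), by have := j.isLt; omega⟩ := by
        intro j hj
        simp only [he, dif_neg hj]
      refine ⟨e, ⟨?_, ?_⟩, ?_⟩
      · intro j
        by_cases hj : (j : ℕ) = 0
        · simp [he, dif_pos hj]
        · rw [heval j hj]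
          have h1 : h ⟨n - 1 - (j : ℕ), by have := j.isLt; omega⟩ + (n - 1 - (j : ℕ)) ≤ n - 1 :=
            hb _
          have := j.isLt
          omega
      · intro j k hjk hj hk
        have hj0 : (j : ℕ) ≠ 0 := by
          intro h0; rw [he] at hj; simp only [dif_pos h0] at hj; omega
        have hk0 : (k : ℕ) ≠ 0 := by
          intro h0; rw [he] at hk; simp only [dif_pos h0] at hk; omega
        rw [heval j hj0] at hj ⊢
        rw [heval k hk0] at hk ⊢
        refine hm _ _ ?_ hk hj
        have hj2 := j.isLt
        have hk2 := k.isLt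
        exact Fin.mk_lt_mk.mpr (by have : (j : ℕ) < (k : ℕ) := hjk; omega)
      · funext i
        have hi := i.isLt
        have hne : (n : ℕ) - 1 - (i : ℕ) ≠ 0 := by omega
        simp only [hφ]
        rw [heval ⟨n - 1 - (i : ℕ), hlt1 i⟩ (by simpa using hne)]
        congr 1
        exact Fin.ext (by simp; omega)
  have := Dcard (n - 1) 1 le_rfl
  rw [← Set.ncard_image_of_injOn hinj, himg, this]
  congr 1
  omega
end

section
/- An inversion sequence avoids the pattern 012 if and only if its positive entries form a weakly decreasing subsequence. -/
/-- An inversion sequence avoids the pattern 012 if and only if its positive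
entries form a weakly decreasing subsequence. -/
theorem avoid_012_iff_pos_weakly_decreasing (n : ℕ) (e : Fin n → ℕ)
    (he : ∀ i : Fin n, e i ≤ (i : ℕ)) :
    (¬ ∃ i j k : Fin n, i < j ∧ j < k ∧ e i < e j ∧ e j < e k) ↔
      ∀ i j : Fin n, i < j → 0 < e i → 0 < e j → e j ≤ e i := by
  constructor
  · intro h i j hij hi hj
    by_contra hlt
    push_neg at hlt
    have hipos : (0 : ℕ) < (i : ℕ) := lt_of_lt_of_le hi (he i)
    have hn : 0 < n := i.pos
    refine h ⟨⟨0, hn⟩, i, j, ?_, hij, ?_, hlt⟩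
    · exact hipos
    · have : e ⟨0, hn⟩ ≤ 0 := he ⟨0, hn⟩
      omega
  · rintro h ⟨i, j, k, hij, hjk, h1, h2⟩
    have := h j k hjk (by omega) (by omega)
    omega
end

section
/- An inversion sequence avoids the pattern 021 if and only if its positive entries form a weakly increasing subsequence. -/
/-- An inversion sequence avoids the pattern 021 if and only if its positive
entries form a weakly increasing subsequence. -/
theorem avoid_021_iff_pos_weakly_increasing (n : ℕ) (e : Fin n → ℕ)
    (he : ∀ i : Fin n, e i ≤ (i : ℕ)) :
    (¬ ∃ i j k : Fin n, i < j ∧ j < k ∧ e i < e k ∧ e k < e j) ↔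
      ∀ i j : Fin n, i < j → 0 < e i → 0 < e j → e i ≤ e j := by
  constructor
  · intro h i j hij hi hj
    by_contra hle
    push_neg at hle
    have h2 : 2 ≤ e i := by omega
    have hipos : 0 < (i : ℕ) := lt_of_lt_of_le (by omega) (he i)
    set z : Fin n := ⟨0, lt_of_le_of_lt (Nat.zero_le _) i.isLt⟩ with hz
    have hez : e z = 0 := Nat.le_zero.mp (he z)
    exact h ⟨z, i, j, hipos, hij, by omega, by omega⟩
  · rintro h ⟨i, j, k, hij, hjk, h1, h2⟩
    have := h j k hjk (by omega) (by omega)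
    omega
end

section
/- For all n ≥ 1, the number of inversion sequences of length n avoiding 210 equals the number of inversion sequences of length n avoiding 201. -/
namespace Inv210201

open List

/-- greedy b v: at each bound, pick the largest remaining value strictly below the bound. -/
def greedy : List ℕ → List ℕ → List ℕ
  | [], _ => []
  | b :: bs, v =>
      let x := WithBot.unbotD 0 ((v.filter (· < b)).maximum)
      x :: greedy bs (v.erase x)

def Brel : ℕ × ℕ → ℕ × ℕ → Prop := fun p q => q.1 < p.2 → q.1 ≤ p.1

/-- Erasing an element keeps pointwise-< against the tail of a sorted bound list. -/
lemma forall₂_erase {v b : List ℕ} (hb : b.Pairwise (· ≤ ·))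
    (h : List.Forall₂ (· < ·) v b) {x : ℕ} (hx : x ∈ v) :
    List.Forall₂ (· < ·) (v.erase x) b.tail := by
  induction h generalizing x with
  | nil => simp at hx
  | @cons y b₀ ys bs hyb hys ih =>
    rcases eq_or_ne x y with rfl | hne
    · simpa using hys
    · have hxys : x ∈ ys := by
        rcases List.mem_cons.mp hx with h' | h'
        · exact absurd h' hne
        · exact h'
      rw [List.erase_cons_tail (by simp [hne.symm])]
      rcases hys with _ | @⟨z, b₁, zs, bs', hzb, hzs⟩
      · simp at hxys
      · refine List.Forall₂.cons ?_ ?_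
        · have hb01 : b₀ ≤ b₁ := (List.pairwise_cons.mp hb).1 _ (by simp)
          omega
        · exact ih (hb := (List.pairwise_cons.mp hb).2) hxys

lemma pick_spec {v : List ℕ} {b y : ℕ} (hy : y ∈ v) (hyb : y < b) :
    WithBot.unbotD 0 ((v.filter (· < b)).maximum) ∈ v ∧
    WithBot.unbotD 0 ((v.filter (· < b)).maximum) < b ∧
    ∀ z ∈ v, z < b → z ≤ WithBot.unbotD 0 ((v.filter (· < b)).maximum) := by
  set l := v.filter (· < b) with hl
  have hyl : y ∈ l := by simp [hl, List.mem_filter, hy, hyb]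
  have hne : l ≠ [] := List.ne_nil_of_mem hyl
  obtain ⟨m, hm⟩ : ∃ m : ℕ, l.maximum = m := by
    cases h : l.maximum with
    | bot => exact absurd (List.maximum_eq_bot.mp h) hne
    | coe m => exact ⟨m, rfl⟩
  have hmem : m ∈ l := List.maximum_mem hm
  have hmv : m ∈ v := (List.mem_filter.mp hmem).1
  have hmb : m < b := by simpa using (List.mem_filter.mp hmem).2
  have hmax : ∀ z ∈ v, z < b → z ≤ m := by
    intro z hz hzb
    exact List.le_maximum_of_mem (by simp [hl, List.mem_filter, hz, hzb]) hm
  rw [hm]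
  exact ⟨hmv, hmb, hmax⟩

lemma pick_eq {v : List ℕ} {b m : ℕ} (hm : m ∈ v) (hmb : m < b)
    (hmax : ∀ z ∈ v, z < b → z ≤ m) :
    WithBot.unbotD 0 ((v.filter (· < b)).maximum) = m := by
  have : (v.filter (· < b)).maximum = m :=
    List.maximum_eq_coe_iff.mpr ⟨by simp [List.mem_filter, hm, hmb],
      fun a ha => hmax a (List.mem_filter.mp ha).1 (by simpa using (List.mem_filter.mp ha).2)⟩
  rw [this]; rfl

/-- Greedy existence: output is a permutation of the input, pointwise below bounds,
and satisfies the B-condition. -/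
lemma greedy_spec {b : List ℕ} : ∀ {v : List ℕ}, b.Pairwise (· ≤ ·) →
    List.Forall₂ (· < ·) v b →
    (greedy b v).Perm v ∧ List.Forall₂ (· < ·) (greedy b v) b ∧
      ((greedy b v).zip b).Pairwise Brel := by
  induction b with
  | nil =>
    intro v _ h
    rcases h with _ | _
    simp [greedy]
  | cons b₀ bs ih =>
    intro v hb h
    rcases h with _ | @⟨v₀, _, vs, _, hvb, hvs⟩
    set v := v₀ :: vs with hv
    obtain ⟨hxv, hxb, hxmax⟩ := pick_spec (v := v) (b := b₀) (List.mem_cons_self) hvb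
    set x := WithBot.unbotD 0 ((v.filter (· < b₀)).maximum) with hx
    have hgr : greedy (b₀ :: bs) v = x :: greedy bs (v.erase x) := rfl
    have hsort_bs : bs.Pairwise (· ≤ ·) := (List.pairwise_cons.mp hb).2
    have hf2 : List.Forall₂ (· < ·) (v.erase x) bs := by
      exact forall₂_erase hb (List.Forall₂.cons hvb hvs) hxv
    obtain ⟨ihp, ihf, ihpw⟩ := ih hsort_bs hf2
    refine ⟨?_, ?_, ?_⟩
    · rw [hgr]
      exact ((ihp.cons x).trans (List.perm_cons_erase hxv).symm)
    · rw [hgr]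
      exact List.Forall₂.cons hxb ihf
    · rw [hgr]
      rw [List.zip_cons_cons]
      refine List.Pairwise.cons ?_ ihpw
      rintro ⟨y, c⟩ hyc (hy : y < b₀)
      have hymem : y ∈ greedy bs (v.erase x) := (List.of_mem_zip hyc).1
      have : y ∈ v.erase x := ihp.mem_iff.mp hymem
      exact hxmax y (List.mem_of_mem_erase this) hy

lemma mem_zip_left {α β : Type*} : ∀ {g : List α} {b : List β},
    g.length = b.length → ∀ {z : α}, z ∈ g → ∃ c, (z, c) ∈ g.zip b := by
  intro g
  induction g with
  | nil => intro b _ z hz; simp at hz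
  | cons x g' ih =>
    intro b hlen z hz
    cases b with
    | nil => simp at hlen
    | cons c b' =>
      rcases List.mem_cons.mp hz with rfl | hz'
      · exact ⟨c, by simp⟩
      · obtain ⟨c', hc'⟩ := ih (by simpa using hlen) hz'
        exact ⟨c', by simp [hc']⟩

/-- Greedy uniqueness: any B-sequence is recovered by greedy from any permutation of it. -/
lemma greedy_eq {b : List ℕ} : ∀ {g w : List ℕ},
    List.Forall₂ (· < ·) g b → ((g.zip b).Pairwise Brel) → w.Perm g →
    greedy b w = g := by
  induction b with
  | nil =>
    intro g w h _ _
    rcases h with _ | _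
    simp [greedy]
  | cons b₀ bs ih =>
    intro g w h hpw hperm
    rcases h with _ | @⟨g₀, _, gs, _, hgb, hgs⟩
    have hg₀w : g₀ ∈ w := hperm.mem_iff.mpr (by simp)
    have hpw' := List.pairwise_cons.mp (by rw [List.zip_cons_cons] at hpw; exact hpw)
    have hmax : ∀ z ∈ w, z < b₀ → z ≤ g₀ := by
      intro z hz hzb
      have hzg : z ∈ g₀ :: gs := hperm.mem_iff.mp hz
      rcases List.mem_cons.mp hzg with rfl | hz'
      · exact le_refl z
      · obtain ⟨c, hc⟩ := mem_zip_left hgs.length_eq hz'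
        exact hpw'.1 (z, c) hc hzb
    have hxg : WithBot.unbotD 0 ((w.filter (· < b₀)).maximum) = g₀ := pick_eq hg₀w hgb hmax
    have hgr : greedy (b₀ :: bs) w
        = WithBot.unbotD 0 ((w.filter (· < b₀)).maximum) :: greedy bs
          (w.erase (WithBot.unbotD 0 ((w.filter (· < b₀)).maximum))) := rfl
    rw [hgr, hxg]
    congr 1
    refine ih hgs hpw'.2 ?_
    have : w.erase g₀ ~ (g₀ :: gs).erase g₀ := hperm.erase g₀
    simpa using this

/-- Sorting preserves the pointwise bound against a sorted bound list. -/
lemma forall₂_sorted_of_perm {b : List ℕ} : ∀ {v w : List ℕ}, b.Pairwise (· ≤ ·) →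
    v.Perm w → w.Pairwise (· ≤ ·) → List.Forall₂ (· < ·) v b →
    List.Forall₂ (· < ·) w b := by
  induction b with
  | nil =>
    intro v w _ hvw _ hvb
    rcases hvb with _ | _
    have : w = [] := List.eq_nil_of_length_eq_zero (by simpa using hvw.length_eq.symm)
    simp [this]
  | cons b₀ bs ih =>
    intro v w hb hvw hw hvb
    rcases hvb with _ | @⟨v₀, _, vs, _, hvb₀, hvs⟩
    cases w with
    | nil => exact absurd hvw.length_eq (by simp)
    | cons w₀ ws =>
      have hv₀w : v₀ ∈ w₀ :: ws := hvw.mem_iff.mp (List.mem_cons_self)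
      have hw₀v₀ : w₀ ≤ v₀ := by
        rcases List.mem_cons.mp hv₀w with rfl | h'
        · exact le_refl _
        · exact List.rel_of_pairwise_cons hw h'
      have hw₀v : w₀ ∈ v₀ :: vs := hvw.mem_iff.mpr (List.mem_cons_self)
      refine List.Forall₂.cons (lt_of_le_of_lt hw₀v₀ hvb₀) ?_
      have herase : ((v₀ :: vs).erase w₀).Perm ws := by
        have := hvw.erase w₀
        simpa using this
      have hf2 : List.Forall₂ (· < ·) ((v₀ :: vs).erase w₀) bs :=
        forall₂_erase hb (List.Forall₂.cons hvb₀ hvs) hw₀v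
      exact ih ((List.pairwise_cons.mp hb).2) herase ((List.pairwise_cons.mp hw).2) hf2

lemma pairwise_iff_forall {α : Type*} [LinearOrder α] {R : α → α → Prop} :
    ∀ {L : List α}, L.Pairwise (· < ·) →
    (L.Pairwise R ↔ ∀ a ∈ L, ∀ b ∈ L, a < b → R a b) := by
  intro L
  induction L with
  | nil => simp
  | cons x xs ih =>
    intro hL
    have hx : ∀ b ∈ xs, x < b := fun b hb => List.rel_of_pairwise_cons hL hb
    have hxs : xs.Pairwise (· < ·) := (List.pairwise_cons.mp hL).2
    rw [List.pairwise_cons, ih hxs]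
    constructor
    · rintro ⟨h1, h2⟩ a ha b hb hab
      rcases List.mem_cons.mp ha with rfl | ha' <;> rcases List.mem_cons.mp hb with rfl | hb'
      · exact absurd hab (lt_irrefl _)
      · exact h1 b hb'
      · exact absurd (hab.trans (hx a ha')) (lt_irrefl _)
      · exact h2 a ha' b hb' hab
    · intro h
      refine ⟨fun b hb => h x (List.mem_cons_self) b (List.mem_cons.mpr (Or.inr hb)) (hx b hb),
        fun a ha b hb hab => h a (List.mem_cons.mpr (Or.inr ha)) b (List.mem_cons.mpr (Or.inr hb)) hab⟩

variable {n : ℕ}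

/-- Running strict-prefix maximum. -/
def M (e : Fin n → ℕ) (i : Fin n) : ℕ := (Finset.Iio i).sup e

/-- Sorted list of dominated positions. -/
def Dl (e : Fin n → ℕ) : List (Fin n) :=
  (Finset.univ.filter fun i => e i < M e i).sort (· ≤ ·)

def vals (e : Fin n → ℕ) : List ℕ := (Dl e).map e
def bnds (e : Fin n → ℕ) : List ℕ := (Dl e).map (M e)

def place (e : Fin n → ℕ) (v : List ℕ) : Fin n → ℕ :=
  fun i => if e i < M e i then v.getD ((Dl e).idxOf i) 0 else e i

lemma mem_Dl {e : Fin n → ℕ} {i : Fin n} : i ∈ Dl e ↔ e i < M e i := by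
  simp [Dl, Finset.mem_sort]

lemma Dl_sorted (e : Fin n → ℕ) : (Dl e).Pairwise (· < ·) := List.sortedLT_iff_pairwise.mp (Finset.sortedLT_sort _)

lemma Dl_nodup (e : Fin n → ℕ) : (Dl e).Nodup := Finset.sort_nodup _ _

lemma M_mono {e : Fin n → ℕ} {i j : Fin n} (h : i ≤ j) : M e i ≤ M e j :=
  Finset.sup_mono (fun k hk => by
    simp only [Finset.mem_Iio] at *; exact lt_of_lt_of_le hk h)

lemma le_M {e : Fin n → ℕ} {i j : Fin n} (h : i < j) : e i ≤ M e j :=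
  Finset.le_sup (by simpa using h)

lemma M_le {e : Fin n → ℕ} (he : ∀ i, e i ≤ (i : ℕ)) (i : Fin n) : M e i ≤ (i : ℕ) :=
  Finset.sup_le (fun j hj => le_trans (he j) (by
    simp only [Finset.mem_Iio] at hj
    exact le_of_lt hj))

lemma bnds_sorted (e : Fin n → ℕ) : (bnds e).Pairwise (· ≤ ·) := by
  unfold bnds
  rw [List.pairwise_map]
  exact (Dl_sorted e).imp (fun h => M_mono (le_of_lt h))

lemma forall₂_map_self {α : Type*} {f g : α → ℕ} :
    ∀ {l : List α}, (∀ a ∈ l, f a < g a) → List.Forall₂ (· < ·) (l.map f) (l.map g) := by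
  intro l
  induction l with
  | nil => simp
  | cons x xs ih =>
    intro h
    exact List.Forall₂.cons (h x (List.mem_cons_self))
      (ih fun a ha => h a (List.mem_cons.mpr (Or.inr ha)))

lemma forall₂_vals_bnds (e : Fin n → ℕ) :
    List.Forall₂ (· < ·) (vals e) (bnds e) :=
  forall₂_map_self (fun a ha => mem_Dl.mp ha)

section Place

variable {e : Fin n → ℕ} {v : List ℕ}

lemma place_of_not_dom {i : Fin n} (hi : ¬ e i < M e i) : place e v i = e i :=
  if_neg hi

lemma place_lt (hv : List.Forall₂ (· < ·) v (bnds e)) {i : Fin n}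
    (hi : e i < M e i) : place e v i < M e i := by
  have himem : i ∈ Dl e := mem_Dl.mpr hi
  have hlen : v.length = (Dl e).length := by
    have := hv.length_eq; simpa [bnds] using this
  have hidx : (Dl e).idxOf i < (Dl e).length := List.idxOf_lt_length_iff.mpr himem
  have hidx' : (Dl e).idxOf i < v.length := by omega
  rw [place, if_pos hi, List.getD_eq_getElem _ _ hidx']
  obtain ⟨-, hget⟩ := List.forall₂_iff_get.mp hv
  have := hget ((Dl e).idxOf i) hidx' (by simpa [bnds] using hidx)
  calc v.get _ < (bnds e).get ⟨(Dl e).idxOf i, by simpa [bnds] using hidx⟩ := this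
    _ = M e i := by
        simp only [bnds, List.get_eq_getElem, List.getElem_map]
        congr 1
        exact List.idxOf_get hidx

lemma M_place (hv : List.Forall₂ (· < ·) v (bnds e)) : M (place e v) = M e := by
  funext i
  apply _root_.le_antisymm
  · apply Finset.sup_le
    intro j hj
    simp only [Finset.mem_Iio] at hj
    by_cases hd : e j < M e j
    · exact le_trans (le_of_lt (place_lt hv hd)) (M_mono (le_of_lt hj))
    · rw [place_of_not_dom hd]; exact le_M hj
  · rcases Finset.eq_empty_or_nonempty (Finset.Iio i) with hemp | hne
    · simp [M, hemp]
    · obtain ⟨j, hj, hjsup⟩ := Finset.exists_mem_eq_sup _ hne e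
      simp only [Finset.mem_Iio] at hj
      have hjnd : ¬ e j < M e j := by
        intro hd
        have h1 : M e j ≤ M e i := M_mono (le_of_lt hj)
        have h2 : M e i = e j := hjsup
        omega
      have : place e v j = e j := place_of_not_dom hjnd
      calc M e i = e j := hjsup
        _ = place e v j := this.symm
        _ ≤ (Finset.Iio i).sup (place e v) := Finset.le_sup (by simpa using hj)

lemma dom_place (hv : List.Forall₂ (· < ·) v (bnds e)) (i : Fin n) :
    (place e v i < M (place e v) i) ↔ (e i < M e i) := by
  rw [M_place hv]
  by_cases hd : e i < M e i
  · simp [hd, place_lt hv hd]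
  · simp [hd, place_of_not_dom hd]

lemma Dl_place (hv : List.Forall₂ (· < ·) v (bnds e)) : Dl (place e v) = Dl e := by
  unfold Dl
  congr 1
  apply Finset.filter_congr
  intro i _
  exact dom_place hv i

lemma bnds_place (hv : List.Forall₂ (· < ·) v (bnds e)) : bnds (place e v) = bnds e := by
  unfold bnds
  rw [Dl_place hv, M_place hv]

lemma vals_place (hv : List.Forall₂ (· < ·) v (bnds e)) : vals (place e v) = v := by
  have hlen : v.length = (Dl e).length := by
    have := hv.length_eq; simpa [bnds] using this
  unfold vals
  rw [Dl_place hv]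
  apply List.ext_get (by simpa using hlen.symm)
  intro t h1 h2
  rw [List.get_eq_getElem, List.getElem_map]
  change place e v ((Dl e).get ⟨t, by simpa using h1⟩) = _
  set i := (Dl e).get ⟨t, by simpa using h1⟩ with hi
  have himem : i ∈ Dl e := List.get_mem _ _
  have hdom : e i < M e i := mem_Dl.mp himem
  have hidx : (Dl e).idxOf i = t := by
    have := (Dl_nodup e).idxOf_getElem t (by simpa using h1)
    simpa [hi, List.get_eq_getElem] using this
  rw [place, if_pos hdom, hidx, List.getD_eq_get _ _ ⟨t, h2⟩]

lemma place_place (hv : List.Forall₂ (· < ·) v (bnds e)) (w : List ℕ) :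
    place (place e v) w = place e w := by
  funext i
  by_cases hd : e i < M e i
  · rw [place, if_pos ((dom_place hv i).mpr hd), Dl_place hv, place, if_pos hd]
  · rw [place, if_neg (fun h => hd ((dom_place hv i).mp h)), place_of_not_dom hd,
      place, if_neg hd]

lemma place_vals : place e (vals e) = e := by
  funext i
  by_cases hd : e i < M e i
  · have himem : i ∈ Dl e := mem_Dl.mpr hd
    have hidx : (Dl e).idxOf i < (Dl e).length := List.idxOf_lt_length_iff.mpr himem
    rw [place, if_pos hd]
    rw [List.getD_eq_getElem _ _ (by simpa [vals] using hidx)]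
    simp only [vals, List.get_eq_getElem, List.getElem_map]
    congr 1
    exact List.idxOf_get hidx
  · exact place_of_not_dom hd

lemma place_le (he : ∀ i, e i ≤ (i : ℕ)) (hv : List.Forall₂ (· < ·) v (bnds e))
    (i : Fin n) : place e v i ≤ (i : ℕ) := by
  by_cases hd : e i < M e i
  · have := place_lt hv hd
    have := M_le he i
    omega
  · rw [place_of_not_dom hd]; exact he i

end Place

def Avoid210 (e : Fin n → ℕ) : Prop :=
  ¬ ∃ i j k : Fin n, i < j ∧ j < k ∧ e j < e i ∧ e k < e j

def Avoid201 (e : Fin n → ℕ) : Prop :=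
  ¬ ∃ i j k : Fin n, i < j ∧ j < k ∧ e j < e k ∧ e k < e i

lemma avoid210_iff {e : Fin n → ℕ} : Avoid210 e ↔ (vals e).Pairwise (· ≤ ·) := by
  have step1 : Avoid210 e ↔ ∀ j k : Fin n, j < k → e j < M e j → e j ≤ e k := by
    constructor
    · intro h j k hjk hd
      obtain ⟨i, hi, hie⟩ := Finset.lt_sup_iff.mp hd
      simp only [Finset.mem_Iio] at hi
      by_contra hc
      exact h ⟨i, j, k, hi, hjk, hie, by omega⟩
    · rintro h ⟨i, j, k, hij, hjk, h1, h2⟩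
      have : e j < M e j := lt_of_lt_of_le h1 (le_M hij)
      have := h j k hjk this
      omega
  have step2 : (∀ j k : Fin n, j < k → e j < M e j → e j ≤ e k) ↔
      (∀ a ∈ Dl e, ∀ b ∈ Dl e, a < b → e a ≤ e b) := by
    constructor
    · intro h a ha b hb hab
      exact h a b hab (mem_Dl.mp ha)
    · intro h j k hjk hd
      by_cases hk : e k < M e k
      · exact h j (mem_Dl.mpr hd) k (mem_Dl.mpr hk) hjk
      · have : M e j ≤ M e k := M_mono (le_of_lt hjk)
        omega
  rw [step1, step2, vals, List.pairwise_map,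
    pairwise_iff_forall (Dl_sorted e)]

lemma avoid201_iff {e : Fin n → ℕ} :
    Avoid201 e ↔ ((vals e).zip (bnds e)).Pairwise Brel := by
  have step1 : Avoid201 e ↔ ∀ j k : Fin n, j < k → e k < M e j → e k ≤ e j := by
    constructor
    · intro h j k hjk hd
      obtain ⟨i, hi, hie⟩ := Finset.lt_sup_iff.mp hd
      simp only [Finset.mem_Iio] at hi
      by_contra hc
      exact h ⟨i, j, k, hi, hjk, by omega, hie⟩
    · rintro h ⟨i, j, k, hij, hjk, h1, h2⟩
      have : e k < M e j := lt_of_lt_of_le h2 (le_M hij)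
      have := h j k hjk this
      omega
  have step2 : (∀ j k : Fin n, j < k → e k < M e j → e k ≤ e j) ↔
      (∀ a ∈ Dl e, ∀ b ∈ Dl e, a < b → (e b < M e a → e b ≤ e a)) := by
    constructor
    · intro h a ha b hb hab
      exact h a b hab
    · intro h j k hjk hd
      have hk : e k < M e k := lt_of_lt_of_le hd (M_mono (le_of_lt hjk))
      by_cases hj : e j < M e j
      · exact h j (mem_Dl.mpr hj) k (mem_Dl.mpr hk) hjk hd
      · omega
  rw [step1, step2, vals, bnds, List.zip_map', List.pairwise_map,
    pairwise_iff_forall (Dl_sorted e)]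
  rfl

def msort (v : List ℕ) : List ℕ := Multiset.sort (v : Multiset ℕ) (· ≤ ·)

lemma msort_perm (v : List ℕ) : (msort v).Perm v := by
  have := Multiset.sort_eq (α := ℕ) (v : Multiset ℕ) (· ≤ ·)
  exact Multiset.coe_eq_coe.mp this

lemma msort_sorted (v : List ℕ) : (msort v).Pairwise (· ≤ ·) :=
  Multiset.pairwise_sort _ _

def Phi (e : Fin n → ℕ) : Fin n → ℕ := place e (greedy (bnds e) (vals e))
def Psi (e : Fin n → ℕ) : Fin n → ℕ := place e (msort (vals e))

section Main

variable {e : Fin n → ℕ}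

lemma greedy_forall₂ : List.Forall₂ (· < ·) (greedy (bnds e) (vals e)) (bnds e) :=
  (greedy_spec (bnds_sorted e) (forall₂_vals_bnds e)).2.1

lemma msort_forall₂ : List.Forall₂ (· < ·) (msort (vals e)) (bnds e) :=
  forall₂_sorted_of_perm (bnds_sorted e) (msort_perm (vals e)).symm
    (msort_sorted _) (forall₂_vals_bnds e)

lemma Phi_le (he : ∀ i, e i ≤ (i : ℕ)) (i : Fin n) : Phi e i ≤ (i : ℕ) :=
  place_le he greedy_forall₂ i

lemma Psi_le (he : ∀ i, e i ≤ (i : ℕ)) (i : Fin n) : Psi e i ≤ (i : ℕ) :=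
  place_le he msort_forall₂ i

lemma Phi_avoid : Avoid201 (Phi e) := by
  rw [avoid201_iff]
  rw [Phi, vals_place greedy_forall₂, bnds_place greedy_forall₂]
  exact (greedy_spec (bnds_sorted e) (forall₂_vals_bnds e)).2.2

lemma Psi_avoid : Avoid210 (Psi e) := by
  rw [avoid210_iff]
  rw [Psi, vals_place msort_forall₂]
  exact msort_sorted _

lemma Psi_Phi (ha : Avoid210 e) : Psi (Phi e) = e := by
  have hperm : (greedy (bnds e) (vals e)).Perm (vals e) :=
    (greedy_spec (bnds_sorted e) (forall₂_vals_bnds e)).1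
  have hsorted : (vals e).Pairwise (· ≤ ·) := avoid210_iff.mp ha
  have hmsort : msort (greedy (bnds e) (vals e)) = vals e :=
    List.Perm.eq_of_pairwise' (msort_sorted _) hsorted ((msort_perm _).trans hperm)
  rw [Psi, Phi, vals_place greedy_forall₂, hmsort, place_place greedy_forall₂,
    place_vals]

lemma Phi_Psi (ha : Avoid201 e) : Phi (Psi e) = e := by
  have hgr : greedy (bnds e) (msort (vals e)) = vals e :=
    greedy_eq (forall₂_vals_bnds e) (avoid201_iff.mp ha) (msort_perm _)
  rw [Phi, Psi, vals_place msort_forall₂, bnds_place msort_forall₂, hgr,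
    place_place msort_forall₂, place_vals]

end Main

end Inv210201

set_option maxHeartbeats 1000000 in
/-- For `n ≥ 1`, the number of inversion sequences of length `n` avoiding 210
equals the number of inversion sequences of length `n` avoiding 201. -/
theorem inv_avoid_210_eq_avoid_201 (n : ℕ) (hn : 1 ≤ n) :
    Set.ncard {e : Fin n → ℕ | (∀ i : Fin n, e i ≤ (i : ℕ)) ∧
      ¬ ∃ i j k : Fin n, i < j ∧ j < k ∧ e j < e i ∧ e k < e j} =
    Set.ncard {e : Fin n → ℕ | (∀ i : Fin n, e i ≤ (i : ℕ)) ∧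
      ¬ ∃ i j k : Fin n, i < j ∧ j < k ∧ e j < e k ∧ e k < e i} := by
  rw [← Nat.card_coe_set_eq, ← Nat.card_coe_set_eq]
  apply Nat.card_congr
  exact {
    toFun := fun x => ⟨Inv210201.Phi x.1, Inv210201.Phi_le x.2.1, Inv210201.Phi_avoid⟩
    invFun := fun x => ⟨Inv210201.Psi x.1, Inv210201.Psi_le x.2.1, Inv210201.Psi_avoid⟩
    left_inv := fun x => Subtype.ext (Inv210201.Psi_Phi x.2.2)
    right_inv := fun x => Subtype.ext (Inv210201.Phi_Psi x.2.2) }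
end

section
/- The number of 000-avoiding inversion sequences of length n equals the number of 0-1-2 increasing trees with n+1 vertices labeled 0,...,n, i.e., rooted unordered trees in which each vertex has at most two children and labels increase along every root-to-leaf path. -/
/-- A 0-1-2 increasing tree on the labels `{0, 1, …, n}` is a rooted unordered
tree in which every child has a larger label than its parent and every vertex
has at most two children.  Since labels strictly increase from the root, the
root is `0` and the tree is uniquely determined by the parent function, which
assigns to each vertex `i + 1` (for `i = 0, …, n-1`) a parent in `{0, …, i}`;
the degree restriction says every label is the parent of at most two vertices. -/
def IsIncreasing012Tree (n : ℕ) (parent : Fin n → ℕ) : Prop :=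
  (∀ i : Fin n, parent i ≤ (i : ℕ)) ∧
    ∀ v : ℕ, Set.ncard {i : Fin n | parent i = v} ≤ 2

/-- The number of 000-avoiding inversion sequences of length `n` equals the
number of 0-1-2 increasing trees with `n + 1` vertices labeled `0, …, n`. -/
theorem inv_avoid_000_eq_increasing_trees (n : ℕ) :
    Set.ncard {e : Fin n → ℕ | (∀ i : Fin n, e i ≤ (i : ℕ)) ∧
      ¬ ∃ i j k : Fin n, i < j ∧ j < k ∧ e i = e j ∧ e j = e k} =
    Set.ncard {parent : Fin n → ℕ | IsIncreasing012Tree n parent} := by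
  congr 1
  ext e
  simp only [Set.mem_setOf_eq, IsIncreasing012Tree]
  refine and_congr_right fun _ => ?_
  constructor
  · intro h v
    by_contra hc
    push_neg at hc
    obtain ⟨a, b, c, ha, hb, hc', hab, hac, hbc⟩ :=
      (Set.two_lt_ncard_iff (Set.toFinite _)).mp hc
    apply h
    rcases lt_trichotomy a b with h1 | h1 | h1
    · rcases lt_trichotomy b c with h2 | h2 | h2
      · exact ⟨a, b, c, h1, h2, ha.trans hb.symm, hb.trans hc'.symm⟩
      · exact absurd h2 hbc
      · rcases lt_trichotomy a c with h3 | h3 | h3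
        · exact ⟨a, c, b, h3, h2, ha.trans hc'.symm, hc'.trans hb.symm⟩
        · exact absurd h3 hac
        · exact ⟨c, a, b, h3, h1, hc'.trans ha.symm, ha.trans hb.symm⟩
    · exact absurd h1 hab
    · rcases lt_trichotomy a c with h2 | h2 | h2
      · exact ⟨b, a, c, h1, h2, hb.trans ha.symm, ha.trans hc'.symm⟩
      · exact absurd h2 hac
      · rcases lt_trichotomy b c with h3 | h3 | h3
        · exact ⟨b, c, a, h3, h2, hb.trans hc'.symm, hc'.trans ha.symm⟩
        · exact absurd h3 hbc
        · exact ⟨c, b, a, h3, h1, hc'.trans hb.symm, hb.trans ha.symm⟩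
  · rintro h ⟨i, j, k, hij, hjk, hei, hej⟩
    have := h (e j)
    have h3 : 2 < Set.ncard {i : Fin n | e i = e j} := by
      rw [Set.two_lt_ncard_iff (Set.toFinite _)]
      exact ⟨i, j, k, hei, rfl, hej.symm, hij.ne, (hij.trans hjk).ne, hjk.ne⟩
    omega
end

section
/- Let E_{n,k} be the number of 000-avoiding inversion sequences of length n with exactly k distinct entries. Then E_{n,k} = (n-k+1)·E_{n-1,k-1} + (2k-n+1)·E_{n-1,k} for n ≥ 1, with E_{0,0} = 1 and E_{n,k} = 0 for k > n or k < ⌈n/2⌉. -/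
/-- `E n k` is the number of 000-avoiding inversion sequences of length `n`
with exactly `k` distinct entries. -/
noncomputable def E (n k : ℕ) : ℕ :=
  Set.ncard {e : Fin n → ℕ | (∀ i : Fin n, e i ≤ (i : ℕ)) ∧
    (¬ ∃ i j l : Fin n, i < j ∧ j < l ∧ e i = e j ∧ e j = e l) ∧
    (Set.range e).ncard = k}

def Avoids {n : ℕ} (e : Fin n → ℕ) : Prop :=
  ¬ ∃ i j l : Fin n, i < j ∧ j < l ∧ e i = e j ∧ e j = e l

instance {n : ℕ} : DecidablePred (Avoids (n := n)) := fun e => by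
  unfold Avoids; infer_instance

def Fs (n k : ℕ) : Finset (Fin n → ℕ) :=
  (Fintype.piFinset fun i : Fin n => Finset.range (i + 1)).filter
    fun e => Avoids e ∧ (Finset.image e Finset.univ).card = k

lemma mem_Fs {n k : ℕ} {e : Fin n → ℕ} :
    e ∈ Fs n k ↔ (∀ i : Fin n, e i ≤ (i : ℕ)) ∧ Avoids e ∧
      (Finset.image e Finset.univ).card = k := by
  simp [Fs, Fintype.mem_piFinset, Nat.lt_succ_iff]

lemma E_eq (n k : ℕ) : E n k = (Fs n k).card := by
  have hr : ∀ (e : Fin n → ℕ),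
      (Set.range e).ncard = (Finset.image e Finset.univ).card := by
    intro e
    rw [← Set.ncard_coe_finset]
    congr 1
    rw [Finset.coe_image, Finset.coe_univ, Set.image_univ]
  rw [E, ← Set.ncard_coe_finset]
  congr 1
  ext e
  simp only [Set.mem_setOf_eq, Finset.mem_coe, mem_Fs, hr, Avoids]

lemma image_univ_succ {m : ℕ} (e : Fin (m + 1) → ℕ) :
    Finset.image e Finset.univ =
      insert (e (Fin.last m)) (Finset.image (e ∘ Fin.castSucc) Finset.univ) := by
  ext v
  simp only [Finset.mem_image, Finset.mem_insert, Finset.mem_univ, true_and,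
    Function.comp_apply]
  constructor
  · rintro ⟨i, rfl⟩
    rcases eq_or_ne i (Fin.last m) with rfl | h
    · exact Or.inl rfl
    · obtain ⟨j, rfl⟩ := Fin.exists_castSucc_eq.2 h
      exact Or.inr ⟨j, rfl⟩
  · rintro (rfl | ⟨j, rfl⟩)
    exacts [⟨_, rfl⟩, ⟨_, rfl⟩]

lemma avoids_restrict {m : ℕ} {e : Fin (m + 1) → ℕ} (h : Avoids e) :
    Avoids (e ∘ Fin.castSucc) := by
  rintro ⟨i, j, l, hij, hjl, h1, h2⟩
  exact h ⟨_, _, _, Fin.castSucc_lt_castSucc_iff.2 hij,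
    Fin.castSucc_lt_castSucc_iff.2 hjl, h1, h2⟩

lemma avoids_snoc {m : ℕ} {f : Fin m → ℕ} {v : ℕ} (hf : Avoids f)
    (hv : ∀ i j : Fin m, f i = v → f j = v → i = j) :
    Avoids (Fin.snoc f v) := by
  rintro ⟨i, j, l, hij, hjl, h1, h2⟩
  rcases eq_or_ne l (Fin.last m) with rfl | hl
  · obtain ⟨j', rfl⟩ := Fin.exists_castSucc_eq.2 (ne_of_lt hjl)
    obtain ⟨i', rfl⟩ := Fin.exists_castSucc_eq.2 (ne_of_lt (hij.trans hjl))
    simp only [Fin.snoc_castSucc, Fin.snoc_last] at h1 h2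
    exact absurd (hv i' j' (h1.trans h2) h2)
      (ne_of_lt (Fin.castSucc_lt_castSucc_iff.1 hij))
  · obtain ⟨l', rfl⟩ := Fin.exists_castSucc_eq.2 hl
    obtain ⟨j', rfl⟩ := Fin.exists_castSucc_eq.2
      (ne_of_lt (hjl.trans (Fin.castSucc_lt_last l')))
    obtain ⟨i', rfl⟩ := Fin.exists_castSucc_eq.2
      (ne_of_lt ((hij.trans hjl).trans (Fin.castSucc_lt_last l')))
    simp only [Fin.snoc_castSucc] at h1 h2
    exact hf ⟨i', j', l', Fin.castSucc_lt_castSucc_iff.1 hij,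
      Fin.castSucc_lt_castSucc_iff.1 hjl, h1, h2⟩

lemma three_order {α : Type*} [LinearOrder α] {a b c : α} {s : Set α}
    (hab : a ≠ b) (hac : a ≠ c) (hbc : b ≠ c)
    (ha : a ∈ s) (hb : b ∈ s) (hc : c ∈ s) :
    ∃ x y z, x < y ∧ y < z ∧ x ∈ s ∧ y ∈ s ∧ z ∈ s := by
  rcases hab.lt_or_gt with h1 | h1 <;> rcases hac.lt_or_gt with h2 | h2 <;>
    rcases hbc.lt_or_gt with h3 | h3
  · exact ⟨a, b, c, h1, h3, ha, hb, hc⟩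
  · exact ⟨a, c, b, h2, h3, ha, hc, hb⟩
  · exact (lt_asymm h2 (h1.trans h3)).elim
  · exact ⟨c, a, b, h2, h1, hc, ha, hb⟩
  · exact ⟨b, a, c, h1, h2, hb, ha, hc⟩
  · exact absurd ((h2.trans h3).trans h1) (lt_irrefl a)
  · exact ⟨b, c, a, h3, h2, hb, hc, ha⟩
  · exact ⟨c, b, a, h3, h1, hc, hb, ha⟩

lemma fiber_card_le_two {m : ℕ} {f : Fin m → ℕ} (hf : Avoids f) (v : ℕ) :
    (Finset.univ.filter fun i => f i = v).card ≤ 2 := by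
  by_contra h
  push_neg at h
  obtain ⟨a, b, c, ha, hb, hc, hab, hac, hbc⟩ := Finset.two_lt_card_iff.1 h
  simp only [Finset.mem_filter, Finset.mem_univ, true_and] at ha hb hc
  obtain ⟨x, y, z, hxy, hyz, hx, hy, hz⟩ :=
    three_order (s := {i : Fin m | f i = v}) hab hac hbc ha hb hc
  exact hf ⟨x, y, z, hxy, hyz, hx.trans hy.symm, hy.trans hz.symm⟩

/-- values appearing exactly once in `f` -/
def onceSet {m : ℕ} (f : Fin m → ℕ) : Finset ℕ :=
  (Finset.image f Finset.univ).filter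
    fun v => (Finset.univ.filter fun i => f i = v).card = 1

lemma once_card {m k : ℕ} {f : Fin m → ℕ} (hf : f ∈ Fs m k) :
    (onceSet f).card + m = 2 * k := by
  obtain ⟨hb, hav, hcard⟩ := mem_Fs.1 hf
  classical
  set fib : ℕ → ℕ := fun v => (Finset.univ.filter fun i => f i = v).card with hfib
  set t := Finset.image f Finset.univ with ht
  set P : ℕ → Prop := fun v => fib v = 1 with hP
  have hsum : m = ∑ v ∈ t, fib v := by
    have := Finset.card_eq_sum_card_fiberwise
      (f := f) (s := Finset.univ) (t := t)
      (fun i _ => Finset.mem_image_of_mem f (Finset.mem_univ i))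
    simpa using this
  have hsplit : ∑ v ∈ t.filter P, fib v + ∑ v ∈ t.filter (fun v => ¬ P v), fib v
      = ∑ v ∈ t, fib v := Finset.sum_filter_add_sum_filter_not t P fib
  have hone : ∑ v ∈ t.filter P, fib v = (t.filter P).card := by
    rw [Finset.sum_congr rfl (fun v hv => (Finset.mem_filter.1 hv).2),
      Finset.sum_const, smul_eq_mul, mul_one]
  have htwo : ∑ v ∈ t.filter (fun v => ¬ P v), fib v
      = 2 * (t.filter (fun v => ¬ P v)).card := by
    rw [Finset.sum_congr rfl (fun v hv => ?_), Finset.sum_const, smul_eq_mul,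
      mul_comm]
    obtain ⟨hv1, hv2⟩ := Finset.mem_filter.1 hv
    obtain ⟨i, -, hi⟩ := Finset.mem_image.1 hv1
    have h1 : 1 ≤ fib v := Finset.card_pos.2
      ⟨i, Finset.mem_filter.2 ⟨Finset.mem_univ i, hi⟩⟩
    have h2 : fib v ≤ 2 := fiber_card_le_two hav v
    omega
  have hcards : (t.filter P).card + (t.filter (fun v => ¬ P v)).card = k := by
    rw [Finset.card_filter_add_card_filter_not]; exact hcard
  have honce : (onceSet f).card = (t.filter P).card := rfl
  omega


lemma snoc_restrict {m : ℕ} (f : Fin m → ℕ) (v : ℕ) :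
    (Fin.snoc f v : Fin (m + 1) → ℕ) ∘ Fin.castSucc = f := by
  funext i
  simp

lemma restrict_mem_new {m k : ℕ} {e : Fin (m + 1) → ℕ} (he : e ∈ Fs (m + 1) k)
    (hnew : e (Fin.last m) ∉ Finset.image (e ∘ Fin.castSucc) Finset.univ) :
    (e ∘ Fin.castSucc) ∈ Fs m (k - 1) := by
  obtain ⟨hb, hav, hcard⟩ := mem_Fs.1 he
  refine mem_Fs.2 ⟨fun i => ?_, avoids_restrict hav, ?_⟩
  · simpa using hb i.castSucc
  · rw [image_univ_succ e, Finset.card_insert_of_notMem hnew] at hcard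
    omega

lemma restrict_mem_rep {m k : ℕ} {e : Fin (m + 1) → ℕ} (he : e ∈ Fs (m + 1) k)
    (hrep : e (Fin.last m) ∈ Finset.image (e ∘ Fin.castSucc) Finset.univ) :
    (e ∘ Fin.castSucc) ∈ Fs m k := by
  obtain ⟨hb, hav, hcard⟩ := mem_Fs.1 he
  refine mem_Fs.2 ⟨fun i => ?_, avoids_restrict hav, ?_⟩
  · simpa using hb i.castSucc
  · rwa [image_univ_succ e, Finset.insert_eq_self.2 hrep] at hcard

lemma snoc_mem_new {m k : ℕ} (hk : 1 ≤ k) {f : Fin m → ℕ} (hf : f ∈ Fs m (k - 1))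
    {v : ℕ} (hv1 : v ≤ m) (hv2 : v ∉ Finset.image f Finset.univ) :
    (Fin.snoc f v : Fin (m + 1) → ℕ) ∈ Fs (m + 1) k := by
  obtain ⟨hb, hav, hcard⟩ := mem_Fs.1 hf
  refine mem_Fs.2 ⟨fun i => ?_, ?_, ?_⟩
  · refine Fin.lastCases ?_ (fun j => ?_) i
    · simpa [Fin.snoc_last] using hv1
    · simpa [Fin.snoc_castSucc] using hb j
  · refine avoids_snoc hav fun i j hi _ => absurd ?_ hv2
    exact Finset.mem_image.2 ⟨i, Finset.mem_univ i, hi⟩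
  · rw [image_univ_succ, Fin.snoc_last, snoc_restrict,
      Finset.card_insert_of_notMem hv2, hcard]
    omega

lemma snoc_mem_rep {m k : ℕ} {f : Fin m → ℕ} (hf : f ∈ Fs m k)
    {v : ℕ} (hv : v ∈ onceSet f) :
    (Fin.snoc f v : Fin (m + 1) → ℕ) ∈ Fs (m + 1) k := by
  obtain ⟨hb, hav, hcard⟩ := mem_Fs.1 hf
  obtain ⟨hv1, hv2⟩ := Finset.mem_filter.1 hv
  obtain ⟨i0, -, hi0⟩ := Finset.mem_image.1 hv1
  have huniq : ∀ i j : Fin m, f i = v → f j = v → i = j := by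
    intro i j hi hj
    have h1 := Finset.card_le_one.1 (le_of_eq hv2)
    exact h1 i (Finset.mem_filter.2 ⟨Finset.mem_univ i, hi⟩)
      j (Finset.mem_filter.2 ⟨Finset.mem_univ j, hj⟩)
  refine mem_Fs.2 ⟨fun i => ?_, avoids_snoc hav huniq, ?_⟩
  · refine Fin.lastCases ?_ (fun j => ?_) i
    · have : v ≤ (i0 : ℕ) := hi0 ▸ hb i0
      simpa [Fin.snoc_last, Fin.val_last] using this.trans (le_of_lt i0.isLt)
    · simpa [Fin.snoc_castSucc] using hb j
  · rw [image_univ_succ, Fin.snoc_last, snoc_restrict,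
      Finset.insert_eq_self.2 hv1, hcard]

lemma cardF1 {m k : ℕ} (hk : 1 ≤ k) :
    ((Fs (m + 1) k).filter
      (fun e => e (Fin.last m) ∉ Finset.image (e ∘ Fin.castSucc) Finset.univ)).card
      = (m + 2 - k) * (Fs m (k - 1)).card := by
  classical
  set F1 := (Fs (m + 1) k).filter
      (fun e => e (Fin.last m) ∉ Finset.image (e ∘ Fin.castSucc) Finset.univ) with hF1
  have hstep1 : ∀ e ∈ F1, (e ∘ Fin.castSucc) ∈ Fs m (k - 1) := by
    intro e he
    obtain ⟨he1, he2⟩ := Finset.mem_filter.1 he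
    exact restrict_mem_new he1 he2
  rw [Finset.card_eq_sum_card_fiberwise hstep1]
  have hstep2 : ∀ f ∈ Fs m (k - 1),
      (F1.filter fun e => e ∘ Fin.castSucc = f).card = m + 2 - k := by
    intro f hf
    have hsub : Finset.image f Finset.univ ⊆ Finset.range (m + 1) := by
      intro v hv
      obtain ⟨i, -, hi⟩ := Finset.mem_image.1 hv
      have := (mem_Fs.1 hf).1 i
      exact Finset.mem_range.2 (by omega)
    have hbij : (F1.filter fun e => e ∘ Fin.castSucc = f).card
        = (Finset.range (m + 1) \ Finset.image f Finset.univ).card := by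
      refine Finset.card_nbij' (fun e => e (Fin.last m)) (fun v => Fin.snoc f v)
        ?_ ?_ ?_ ?_
      · intro e he
        obtain ⟨he1, hfe⟩ := Finset.mem_filter.1 he
        obtain ⟨he2, he3⟩ := Finset.mem_filter.1 he1
        refine Finset.mem_sdiff.2 ⟨Finset.mem_range.2 ?_, ?_⟩
        · have := (mem_Fs.1 he2).1 (Fin.last m)
          simpa [Fin.val_last, Nat.lt_succ_iff] using this
        · rw [← hfe]; exact he3
      · intro v hv
        obtain ⟨hv1, hv2⟩ := Finset.mem_sdiff.1 hv
        have hv1' : v ≤ m := Nat.lt_succ_iff.1 (Finset.mem_range.1 hv1)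
        refine Finset.mem_filter.2 ⟨Finset.mem_filter.2
          ⟨snoc_mem_new hk hf hv1' hv2, ?_⟩, snoc_restrict f v⟩
        simp only [snoc_restrict, Fin.snoc_last]
        exact hv2
      · intro e he
        obtain ⟨he1, hfe⟩ := Finset.mem_filter.1 he
        rw [← hfe]
        exact funext fun i => Fin.lastCases (Fin.snoc_last _ _)
          (fun j => Fin.snoc_castSucc _ _ j) i
      · intro v _
        exact Fin.snoc_last _ _
    rw [hbij, Finset.card_sdiff_of_subset hsub, Finset.card_range, (mem_Fs.1 hf).2.2]
    omega
  exact (Finset.sum_const_nat hstep2).trans (mul_comm _ _)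

lemma cardF2 {m k : ℕ} :
    ((Fs (m + 1) k).filter
      (fun e => e (Fin.last m) ∈ Finset.image (e ∘ Fin.castSucc) Finset.univ)).card
      = (2 * k - m) * (Fs m k).card := by
  classical
  set F2 := (Fs (m + 1) k).filter
      (fun e => e (Fin.last m) ∈ Finset.image (e ∘ Fin.castSucc) Finset.univ) with hF2
  have hstep1 : ∀ e ∈ F2, (e ∘ Fin.castSucc) ∈ Fs m k := by
    intro e he
    obtain ⟨he1, he2⟩ := Finset.mem_filter.1 he
    exact restrict_mem_rep he1 he2
  rw [Finset.card_eq_sum_card_fiberwise hstep1]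
  have hstep2 : ∀ f ∈ Fs m k,
      (F2.filter fun e => e ∘ Fin.castSucc = f).card = 2 * k - m := by
    intro f hf
    have hbij : (F2.filter fun e => e ∘ Fin.castSucc = f).card
        = (onceSet f).card := by
      refine Finset.card_nbij' (fun e => e (Fin.last m)) (fun v => Fin.snoc f v)
        ?_ ?_ ?_ ?_
      · intro e he
        obtain ⟨he1, hfe⟩ := Finset.mem_filter.1 he
        obtain ⟨he2, he3⟩ := Finset.mem_filter.1 he1
        have hav := (mem_Fs.1 he2).2.1
        rw [hfe] at he3
        refine Finset.mem_filter.2 ⟨he3, ?_⟩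
        refine le_antisymm (Finset.card_le_one.2 fun a ha b hb => ?_)
          (Finset.card_pos.2 ?_)
        · obtain ⟨-, ha2⟩ := Finset.mem_filter.1 ha
          obtain ⟨-, hb2⟩ := Finset.mem_filter.1 hb
          by_contra hne
          have key : ∀ x y : Fin m, x < y → f x = e (Fin.last m) →
              f y = e (Fin.last m) → False := by
            intro x y hxy hx hy
            refine hav ⟨x.castSucc, y.castSucc, Fin.last m,
              Fin.castSucc_lt_castSucc_iff.2 hxy, Fin.castSucc_lt_last y, ?_, ?_⟩
            · have h1 := congrFun hfe x
              have h2 := congrFun hfe y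
              simp only [Function.comp_apply] at h1 h2
              rw [h1, h2, hx, hy]
            · have h2 := congrFun hfe y
              simp only [Function.comp_apply] at h2
              rw [h2, hy]
          rcases Ne.lt_or_gt hne with h | h
          · exact key a b h ha2 hb2
          · exact key b a h hb2 ha2
        · obtain ⟨i, -, hi⟩ := Finset.mem_image.1 he3
          exact ⟨i, Finset.mem_filter.2 ⟨Finset.mem_univ i, hi⟩⟩
      · intro v hv
        refine Finset.mem_filter.2 ⟨Finset.mem_filter.2
          ⟨snoc_mem_rep hf hv, ?_⟩, snoc_restrict f v⟩
        simp only [snoc_restrict, Fin.snoc_last]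
        exact (Finset.mem_filter.1 hv).1
      · intro e he
        obtain ⟨he1, hfe⟩ := Finset.mem_filter.1 he
        rw [← hfe]
        exact funext fun i => Fin.lastCases (Fin.snoc_last _ _)
          (fun j => Fin.snoc_castSucc _ _ j) i
      · intro v _
        exact Fin.snoc_last _ _
    have := once_card hf
    rw [hbij]
    omega
  exact (Finset.sum_const_nat hstep2).trans (mul_comm _ _)

/-- The recurrence `E_{n,k} = (n-k+1)·E_{n-1,k-1} + (2k-n+1)·E_{n-1,k}` for
`n ≥ 1` (and `k ≥ 1`, so that `k - 1` makes sense), together with the initial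
conditions `E_{0,0} = 1` and `E_{n,k} = 0` for `k > n` or `k < ⌈n/2⌉`. -/
theorem E_recurrence :
    (∀ n k : ℕ, 1 ≤ n → 1 ≤ k →
      (E n k : ℤ) = ((n : ℤ) - k + 1) * E (n - 1) (k - 1)
        + (2 * (k : ℤ) - n + 1) * E (n - 1) k) ∧
    E 0 0 = 1 ∧
    (∀ n k : ℕ, n < k ∨ k < (n + 1) / 2 → E n k = 0) := by
  classical
  have hzero : ∀ n k : ℕ, n < k ∨ k < (n + 1) / 2 → E n k = 0 := by
    intro n k h
    rw [E_eq, Finset.card_eq_zero, Finset.eq_empty_iff_forall_notMem]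
    intro e he
    obtain ⟨hb, hav, hcard⟩ := mem_Fs.1 he
    have h1 : k ≤ n := by
      rw [← hcard]
      calc (Finset.image e Finset.univ).card ≤ (Finset.univ : Finset (Fin n)).card :=
            Finset.card_image_le
        _ = n := by simp
    have h2 : n ≤ 2 * k := by
      have hsum : n = ∑ v ∈ Finset.image e Finset.univ,
          (Finset.univ.filter fun i => e i = v).card := by
        have := Finset.card_eq_sum_card_fiberwise (f := e) (s := Finset.univ)
          (t := Finset.image e Finset.univ)
          (fun i _ => Finset.mem_image_of_mem e (Finset.mem_univ i))
        simpa using this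
      have hle : ∑ v ∈ Finset.image e Finset.univ,
          (Finset.univ.filter fun i => e i = v).card
          ≤ ∑ _v ∈ Finset.image e Finset.univ, 2 :=
        Finset.sum_le_sum fun v _ => fiber_card_le_two hav v
      rw [Finset.sum_const, smul_eq_mul, hcard] at hle
      omega
    omega
  have hbase : E 0 0 = 1 := by
    rw [E_eq]
    refine Finset.card_eq_one.2 ⟨fun i => i.elim0, ?_⟩
    ext e
    simp only [Finset.mem_singleton, mem_Fs]
    constructor
    · intro _
      funext i
      exact i.elim0
    · rintro rfl
      refine ⟨fun i => i.elim0, ?_, by simp⟩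
      intro h
      obtain ⟨i, -⟩ := h
      exact i.elim0
  refine ⟨?_, hbase, hzero⟩
  intro n k hn hk
  obtain ⟨m, rfl⟩ : ∃ m, n = m + 1 := ⟨n - 1, (Nat.succ_pred_eq_of_pos hn).symm⟩
  simp only [Nat.add_sub_cancel]
  by_cases h1 : m + 1 < k
  · rw [hzero (m + 1) k (Or.inl h1), hzero m (k - 1) (Or.inl (by omega)),
      hzero m k (Or.inl (by omega))]
    push_cast
    ring
  by_cases h2 : 2 * k ≤ m
  · rw [hzero (m + 1) k (Or.inr (by omega)), hzero m (k - 1) (Or.inr (by omega))]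
    rcases eq_or_lt_of_le h2 with heq | hlt
    · have hc : 2 * (k : ℤ) - (↑(m + 1) : ℤ) + 1 = 0 := by
        have : (2 * k : ℤ) = (m : ℤ) := by exact_mod_cast heq
        push_cast at this ⊢
        omega
      rw [hc]
      push_cast
      ring
    · rw [hzero m k (Or.inr (by omega))]
      push_cast
      ring
  push_neg at h1 h2
  have hmain : E (m + 1) k = (m + 2 - k) * E m (k - 1) + (2 * k - m) * E m k := by
    rw [E_eq, E_eq, E_eq, ← cardF1 hk, ← cardF2]
    have h := Finset.card_filter_add_card_filter_not (s := Fs (m + 1) k)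
      (fun e => e (Fin.last m) ∈ Finset.image (e ∘ Fin.castSucc) Finset.univ)
    beta_reduce at h
    linarith
  rw [hmain, Nat.cast_add, Nat.cast_mul, Nat.cast_mul,
    Nat.cast_sub (show k ≤ m + 2 by omega), Nat.cast_sub (show m ≤ 2 * k by omega)]
  push_cast
  ring
end

section
/- An inversion sequence (e_1,...,e_n) avoids the pattern 001 if and only if there exists t ∈ [n] such that e_1 < e_2 < ⋯ < e_t ≥ e_{t+1} ≥ e_{t+2} ≥ ⋯ ≥ e_n. -/
/-- An inversion sequence `(e_1, …, e_n)` avoids the pattern 001 if and only if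
there is a `t ∈ [n]` such that `e_1 < e_2 < ⋯ < e_t ≥ e_{t+1} ≥ ⋯ ≥ e_n`. -/
theorem avoid_001_characterization (n : ℕ) (hn : 1 ≤ n) (e : Fin n → ℕ)
    (he : ∀ i : Fin n, e i ≤ (i : ℕ)) :
    (¬ ∃ i j k : Fin n, i < j ∧ j < k ∧ e i = e j ∧ e j < e k) ↔
      ∃ t : Fin n,
        (∀ i j : Fin n, i < j → j ≤ t → e i < e j) ∧
        (∀ i j : Fin n, t ≤ i → i ≤ j → e j ≤ e i) := by
  constructor
  · intro hav
    classical
    set f : ℕ → ℕ := fun i => if h : i < n then e ⟨i, h⟩ else 0 with hf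
    have hfe : ∀ (i : ℕ) (h : i < n), f i = e ⟨i, h⟩ := by
      intro i h; simp [hf, h]
    have hfle : ∀ i < n, f i ≤ i := by
      intro i h; rw [hfe i h]; exact he ⟨i, h⟩
    set P : ℕ → Prop := fun m => ∀ i ≤ m, f i = i with hPdef
    have hP0 : P 0 := by
      intro i hi
      interval_cases i
      exact Nat.le_zero.mp (hfle 0 hn)
    set t : ℕ := Nat.findGreatest P (n - 1) with htdef
    have ht : t < n := lt_of_le_of_lt (Nat.findGreatest_le _) (Nat.sub_lt hn one_pos)
    have hPt : P t := Nat.findGreatest_spec (Nat.zero_le _) hP0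
    -- key: f (t+1) ≤ t when t+1 < n
    have hB1 : t + 1 < n → f (t + 1) ≤ t := by
      intro h
      have hle : t + 1 ≤ n - 1 := Nat.le_sub_one_of_lt h
      have hnP : ¬ P (t + 1) := Nat.findGreatest_is_greatest (Nat.lt_succ_self t) hle
      have hne : f (t + 1) ≠ t + 1 := by
        intro heq
        apply hnP
        intro i hi
        rcases Nat.lt_or_ge i (t + 1) with h' | h'
        · exact hPt i (Nat.lt_succ_iff.mp h')
        · have : i = t + 1 := le_antisymm hi h'
          rw [this]; exact heq
      exact Nat.lt_succ_iff.mp (lt_of_le_of_ne (hfle _ h) hne)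
    -- key: all values after t are ≤ t
    have hB : ∀ i, t < i → i < n → f i ≤ t := by
      intro i hti hin
      rcases Nat.lt_or_ge (t + 1) i with h' | h'
      · -- t + 1 < i
        by_contra hc
        push_neg at hc
        have h1 : t + 1 < n := lt_trans h' hin
        have hv : f (t + 1) ≤ t := hB1 h1
        have hvn : f (t + 1) < n := lt_of_le_of_lt hv (lt_trans (Nat.lt_of_lt_of_le (Nat.lt_succ_self t) (le_of_lt h')) hin)
        apply hav
        refine ⟨⟨f (t + 1), hvn⟩, ⟨t + 1, h1⟩, ⟨i, hin⟩, ?_, ?_, ?_, ?_⟩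
        · exact Nat.lt_succ_of_le hv
        · exact h'
        · rw [← hfe _ hvn, ← hfe _ h1]
          exact hPt _ hv
        · rw [← hfe _ h1, ← hfe _ hin]
          exact lt_of_le_of_lt hv hc
      · have : i = t + 1 := le_antisymm h' (Nat.succ_le_of_lt hti)
        rw [this]; exact hB1 (this ▸ hin)
    refine ⟨⟨t, ht⟩, ?_, ?_⟩
    · intro i j hij hjt
      have hi : (i : ℕ) ≤ t := le_trans (le_of_lt hij) hjt
      have h1 : e i = (i : ℕ) := by rw [← hfe _ i.isLt]; exact hPt _ hi
      have h2 : e j = (j : ℕ) := by rw [← hfe _ j.isLt]; exact hPt _ hjt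
      rw [h1, h2]; exact hij
    · intro i j hti hij
      by_contra hc
      push_neg at hc
      have hij' : (i : ℕ) < (j : ℕ) := by
        rcases lt_or_eq_of_le hij with h | h
        · exact h
        · rw [h] at hc; exact absurd hc (lt_irrefl _)
      have hti' : t ≤ (i : ℕ) := hti
      rcases lt_or_eq_of_le hti' with h | h
      · -- t < i : pattern (f i, i, j)
        have hfi : f (i : ℕ) ≤ t := hB _ h i.isLt
        have hfi' : e i ≤ t := by rw [← hfe _ i.isLt]; exact hfi
        have hvn : e i < n := lt_of_le_of_lt hfi' ht
        apply hav
        refine ⟨⟨e i, hvn⟩, i, j, ?_, hij', ?_, hc⟩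
        · simp only [Fin.lt_def]
          exact lt_of_le_of_lt hfi' h
        · have := hPt (e i) hfi'
          rw [hfe _ hvn] at this
          exact this
      · -- i = t : then e j ≤ t = e i, contradiction
        have hjt : t < (j : ℕ) := h ▸ hij'
        have hfj : e j ≤ t := by
          rw [← hfe _ j.isLt]; exact hB _ hjt j.isLt
        have hei : e i = t := by
          rw [← hfe _ i.isLt]
          have := hPt (i : ℕ) (le_of_eq h.symm)
          rw [this, ← h]
        exact absurd hc (not_lt.mpr (hei ▸ hfj))
  · rintro ⟨t, h1, h2⟩ ⟨i, j, k, hij, hjk, heq, hlt⟩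
    by_cases hjt : j ≤ t
    · exact absurd heq (ne_of_lt (h1 i j hij hjt))
    · push_neg at hjt
      exact absurd hlt (not_lt.mpr (h2 j k (le_of_lt hjt) (le_of_lt hjk)))
end

section
/- For n ≥ 1, the number of inversion sequences of length n avoiding the pattern 001 equals 2^{n-1}. -/
open Finset

private lemma sm_add {l : ℕ} {f : Fin l → ℕ} (hf : StrictMono f) :
    ∀ (c : ℕ) (a b : Fin l), (a : ℕ) = (b : ℕ) + c → f b + c ≤ f a := by
  intro c
  induction c with
  | zero =>
    intro a b h
    have : a = b := Fin.ext (by omega)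
    simp [this]
  | succ c ih =>
    intro a b h
    have ha : (b : ℕ) + c < l := by have := a.isLt; omega
    have h1 := ih ⟨(b : ℕ) + c, ha⟩ b rfl
    have h2 : f ⟨(b : ℕ) + c, ha⟩ < f a := hf (by simp [Fin.lt_def]; omega)
    omega

private lemma sm_le_apply {l : ℕ} {f : Fin l → ℕ} (hf : StrictMono f) (k : Fin l) :
    (k : ℕ) ≤ f k := by
  have hpos : 0 < l := k.pos
  have h0 : ((⟨0, hpos⟩ : Fin l) : ℕ) = 0 := rfl
  have := sm_add hf (k : ℕ) k ⟨0, hpos⟩ (by omega)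
  omega

/-- The `c`-th smallest element of a finset of naturals, as `getD` on the sorted list. -/
private def nth (A : Finset ℕ) (c : ℕ) : ℕ := (A.sort (· ≤ ·)).getD c 0

private lemma nth_eq_orderEmbOfFin (A : Finset ℕ) (k : Fin A.card) :
    nth A (k : ℕ) = A.orderEmbOfFin rfl k := by
  rw [Finset.orderEmbOfFin_apply, nth,
    List.getD_eq_getElem _ _ (by rw [Finset.length_sort]; exact k.isLt)]
  rfl

private lemma nth_mem {A : Finset ℕ} {c : ℕ} (hc : c < A.card) : nth A c ∈ A := by
  have := nth_eq_orderEmbOfFin A ⟨c, hc⟩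
  simp only [Fin.val_mk] at this
  rw [this]
  exact Finset.orderEmbOfFin_mem A rfl _

private lemma nth_strictMono (A : Finset ℕ) :
    StrictMono (fun k : Fin A.card => nth A (k : ℕ)) := by
  intro a b hab
  simp only [nth_eq_orderEmbOfFin]
  exact (A.orderEmbOfFin rfl).strictMono hab

private lemma nth_le {A : Finset ℕ} {c : ℕ} (hc : c < A.card) : c ≤ nth A c := by
  have := sm_le_apply (nth_strictMono A) ⟨c, hc⟩
  simpa using this

private lemma nth_add {A : Finset ℕ} {c c' d : ℕ} (hc : c < A.card) (h : c = c' + d) :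
    nth A c' + d ≤ nth A c := by
  have := sm_add (nth_strictMono A) d ⟨c, hc⟩ ⟨c', by omega⟩ (by simpa using h)
  simpa using this

private lemma nth_surj {A : Finset ℕ} {a : ℕ} (ha : a ∈ A) :
    ∃ c < A.card, nth A c = a := by
  have : a ∈ Set.range (A.orderEmbOfFin rfl) := by
    rw [Finset.range_orderEmbOfFin]; exact ha
  obtain ⟨k, hk⟩ := this
  exact ⟨(k : ℕ), k.isLt, by rw [nth_eq_orderEmbOfFin]; exact hk⟩

/-- Once a value drops below its index, everything later is ≤ it. -/
private lemma drop {n : ℕ} {e : Fin n → ℕ} (hb : ∀ i : Fin n, e i ≤ (i : ℕ))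
    (hav : ¬∃ i j k : Fin n, i < j ∧ j < k ∧ e i = e j ∧ e j < e k) :
    ∀ i j : Fin n, i < j → e i < (i : ℕ) → e j ≤ e i := by
  suffices H : ∀ v : ℕ, ∀ i j : Fin n, (i : ℕ) = v → i < j → e i < (i : ℕ) → e j ≤ e i by
    intro i j hij hi; exact H (i : ℕ) i j rfl hij hi
  intro v
  induction v using Nat.strong_induction_on with
  | _ v ih =>
    intro i j hv hij hei
    have hvn : e i < n := by have := i.isLt; omega
    set vI : Fin n := ⟨e i, hvn⟩ with hvIdef
    have hvI_lt_i : vI < i := by simpa [Fin.lt_def, hvIdef] using hei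
    rcases lt_or_eq_of_le (hb vI) with hlt | heq
    · have hvIj : vI < j := lt_trans hvI_lt_i hij
      have h2 := ih (e i) (by omega) vI j (by simp [hvIdef]) hvIj (by simpa [hvIdef] using hlt)
      have hvv : (vI : ℕ) = e i := rfl
      omega
    · by_contra hc
      push_neg at hc
      refine hav ⟨vI, i, j, hvI_lt_i, hij, ?_, ?_⟩
      · have : (vI : ℕ) = e i := rfl
        omega
      · omega

/-- encoding: an avoiding inversion sequence to a finite set of naturals -/
def enc (n : ℕ) (e : Fin n → ℕ) : Finset ℕ :=
  (Finset.univ.filter fun i : Fin n => e i < (i : ℕ)).image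
    fun i : Fin n => e i + (n - 1 - (i : ℕ))

/-- decoding -/
def dec (n : ℕ) (A : Finset ℕ) : Fin n → ℕ := fun i =>
  if n - A.card ≤ (i : ℕ) then nth A (n - 1 - (i : ℕ)) - (n - 1 - (i : ℕ)) else (i : ℕ)

section main

variable {n : ℕ}

/-- the positions where the value drops below the index form an upper interval -/
private lemma filt_iff {e : Fin n → ℕ} (hb : ∀ i : Fin n, e i ≤ (i : ℕ))
    (hav : ¬∃ i j k : Fin n, i < j ∧ j < k ∧ e i = e j ∧ e j < e k) (i : Fin n) :
    e i < (i : ℕ) ↔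
      n - (Finset.univ.filter fun j : Fin n => e j < (j : ℕ)).card ≤ (i : ℕ) := by
  set F := Finset.univ.filter fun j : Fin n => e j < (j : ℕ) with hF
  have hup : ∀ a b : Fin n, e a < (a : ℕ) → a ≤ b → e b < (b : ℕ) := by
    intro a b ha hab
    rcases eq_or_lt_of_le hab with rfl | hlt
    · exact ha
    · have := drop hb hav a b hlt ha
      have := Fin.lt_def.mp hlt
      omega
  constructor
  · intro hi
    have hsub : Finset.Ici i ⊆ F := by
      intro j hj
      rw [hF, Finset.mem_filter]
      exact ⟨Finset.mem_univ _, hup i j hi (Finset.mem_Ici.mp hj)⟩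
    have hcard := Finset.card_le_card hsub
    rw [Fin.card_Ici] at hcard
    have := i.isLt
    omega
  · intro hi
    rcases Nat.eq_zero_or_pos F.card with h0 | hpos
    · rw [h0] at hi
      have := i.isLt
      omega
    · have hne : F.Nonempty := Finset.card_pos.mp hpos
      have hi0 : e (F.min' hne) < ((F.min' hne : Fin n) : ℕ) :=
        (Finset.mem_filter.mp (F.min'_mem hne)).2
      have hsub : F ⊆ Finset.Ici (F.min' hne) := fun j hj => Finset.mem_Ici.mpr (F.min'_le j hj)
      have hcard := Finset.card_le_card hsub
      rw [Fin.card_Ici] at hcard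
      have hle : ((F.min' hne : Fin n) : ℕ) ≤ (i : ℕ) := by have := (F.min' hne).isLt; omega
      exact hup (F.min' hne) i hi0 hle

private lemma dec_enc {e : Fin n → ℕ} (hb : ∀ i : Fin n, e i ≤ (i : ℕ))
    (hav : ¬∃ i j k : Fin n, i < j ∧ j < k ∧ e i = e j ∧ e j < e k) :
    dec n (enc n e) = e := by
  classical
  set F := Finset.univ.filter fun j : Fin n => e j < (j : ℕ) with hF
  have hFn : F.card ≤ n := by
    have := Finset.card_le_univ F
    simpa using this
  have hinj : Set.InjOn (fun i : Fin n => e i + (n - 1 - (i : ℕ))) F := by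
    intro a ha b hb'
    simp only [hF, Finset.coe_filter, Set.mem_setOf_eq] at ha hb'
    intro hab
    simp only at hab
    rcases lt_trichotomy a b with h | h | h
    · have := drop hb hav a b h ha.2
      have h1 := Fin.lt_def.mp h
      have := b.isLt
      omega
    · exact h
    · have := drop hb hav b a h hb'.2
      have h1 := Fin.lt_def.mp h
      have := a.isLt
      omega
  have hcard : (enc n e).card = F.card := by
    rw [enc, ← hF, Finset.card_image_of_injOn hinj]
  -- the c-th smallest element of `enc n e` is `e ⟨n-1-c⟩ + c`
  have hmain : ∀ (c : ℕ) (i : Fin n), c < (enc n e).card → (i : ℕ) = n - 1 - c →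
      nth (enc n e) c = e i + c := by
    have huniq := Finset.orderEmbOfFin_unique (s := enc n e) (k := (enc n e).card) rfl
      (f := fun k : Fin (enc n e).card =>
        e ⟨n - 1 - (k : ℕ), by have := k.isLt; omega⟩ + (k : ℕ)) ?_ ?_
    · intro c i hc hi
      have h1 := congrFun huniq ⟨c, hc⟩
      simp only [Fin.val_mk] at h1
      have h2 := nth_eq_orderEmbOfFin (enc n e) ⟨c, hc⟩
      simp only [Fin.val_mk] at h2
      rw [h2, ← h1]
      congr 1
      · congr 1
        exact Fin.ext (by simp [hi])
    · -- membership
      intro k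
      have hkc : (k : ℕ) < F.card := by rw [← hcard]; exact k.isLt
      have hin : e ⟨n - 1 - (k : ℕ), by have := k.isLt; omega⟩
          < ((⟨n - 1 - (k : ℕ), by have := k.isLt; omega⟩ : Fin n) : ℕ) := by
        rw [filt_iff hb hav, ← hF]
        simp only [Fin.val_mk]
        omega
      simp only [enc]
      refine Finset.mem_image.mpr ⟨⟨n - 1 - (k : ℕ), by have := k.isLt; omega⟩, ?_, ?_⟩
      · rw [Finset.mem_filter]
        exact ⟨Finset.mem_univ _, hin⟩
      · simp only [Fin.val_mk]
        congr 1
        have := k.isLt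
        omega
    · -- strict monotonicity
      intro a b hab
      have hab' : (a : ℕ) < (b : ℕ) := hab
      have hbc : (b : ℕ) < F.card := by rw [← hcard]; exact b.isLt
      set ia : Fin n := ⟨n - 1 - (a : ℕ), by have := a.isLt; omega⟩ with hia
      set ib : Fin n := ⟨n - 1 - (b : ℕ), by have := b.isLt; omega⟩ with hib
      have hib_lt : e ib < (ib : ℕ) := by
        rw [filt_iff hb hav, ← hF]
        simp only [hib, Fin.val_mk]
        omega
      have hba : ib < ia := by
        simp only [Fin.lt_def, hia, hib, Fin.val_mk]
        omega
      have hde := drop hb hav ib ia hba hib_lt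
      show e ia + (a : ℕ) < e ib + (b : ℕ)
      have hibv : (ib : ℕ) = n - 1 - (b : ℕ) := rfl
      have hiav : (ia : ℕ) = n - 1 - (a : ℕ) := rfl
      omega
  -- now compute `dec n (enc n e) i`
  funext i
  by_cases h : n - (enc n e).card ≤ (i : ℕ)
  · have hd : dec n (enc n e) i
        = nth (enc n e) (n - 1 - (i : ℕ)) - (n - 1 - (i : ℕ)) := if_pos h
    have hlt : n - 1 - (i : ℕ) < (enc n e).card := by have := i.isLt; omega
    have hval := hmain (n - 1 - (i : ℕ)) i hlt (by have := i.isLt; omega)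
    rw [hd, hval]
    omega
  · have hd : dec n (enc n e) i = (i : ℕ) := if_neg h
    rw [hcard] at h
    have hni : ¬ e i < (i : ℕ) := by
      rw [filt_iff hb hav, ← hF]
      exact h
    have := hb i
    rw [hd]
    omega

private lemma enc_dec (hn : 1 ≤ n) {A : Finset ℕ} (hA : A ⊆ Finset.range (n - 1)) :
    (∀ i : Fin n, dec n A i ≤ (i : ℕ)) ∧
    (¬∃ i j k : Fin n, i < j ∧ j < k ∧ dec n A i = dec n A j ∧ dec n A j < dec n A k) ∧
    enc n (dec n A) = A := by
  have hl : A.card ≤ n - 1 := by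
    have := Finset.card_le_card hA
    simpa using this
  have hbnd : ∀ c : ℕ, c < A.card → nth A c < n - 1 := by
    intro c hc
    exact Finset.mem_range.mp (hA (nth_mem hc))
  have hval : ∀ i : Fin n, n - A.card ≤ (i : ℕ) →
      dec n A i = nth A (n - 1 - (i : ℕ)) - (n - 1 - (i : ℕ)) := fun i h => if_pos h
  have hid : ∀ i : Fin n, (i : ℕ) < n - A.card → dec n A i = (i : ℕ) :=
    fun i h => if_neg (by omega)
  have hidx : ∀ i : Fin n, n - A.card ≤ (i : ℕ) → n - 1 - (i : ℕ) < A.card := by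
    intro i h
    have := i.isLt
    omega
  have hlt : ∀ i : Fin n, n - A.card ≤ (i : ℕ) → dec n A i < (i : ℕ) := by
    intro i h
    have h1 := hbnd _ (hidx i h)
    have := i.isLt
    rw [hval i h]
    omega
  have hbound : ∀ i : Fin n, dec n A i ≤ (i : ℕ) := by
    intro i
    by_cases h : n - A.card ≤ (i : ℕ)
    · exact le_of_lt (hlt i h)
    · rw [hid i (by omega)]
  have hmono : ∀ i j : Fin n, n - A.card ≤ (i : ℕ) → (i : ℕ) ≤ (j : ℕ) →
      dec n A j ≤ dec n A i := by
    intro i j hi hij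
    have hj : n - A.card ≤ (j : ℕ) := le_trans hi hij
    rw [hval i hi, hval j hj]
    have hadd := nth_add (hidx i hi)
      (show n - 1 - (i : ℕ) = (n - 1 - (j : ℕ)) + ((n - 1 - (i : ℕ)) - (n - 1 - (j : ℕ)))
        from by have := j.isLt; omega)
    have := j.isLt
    have := i.isLt
    omega
  refine ⟨hbound, ?_, ?_⟩
  · rintro ⟨i, j, k, hij, hjk, heq, hlt'⟩
    have hij' := Fin.lt_def.mp hij
    have hjk' := Fin.lt_def.mp hjk
    by_cases hj : n - A.card ≤ (j : ℕ)
    · have hk : n - A.card ≤ (k : ℕ) := by omega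
      have := hmono j k hj (by omega)
      omega
    · rw [hid i (by omega), hid j (by omega)] at heq
      omega
  · ext a
    simp only [enc, Finset.mem_image, Finset.mem_filter, Finset.mem_univ, true_and]
    constructor
    · rintro ⟨i, hi, rfl⟩
      have hmi : n - A.card ≤ (i : ℕ) := by
        by_contra h
        rw [hid i (by omega)] at hi
        omega
      have h1 := nth_le (hidx i hmi)
      rw [hval i hmi]
      have h2 : nth A (n - 1 - (i : ℕ)) - (n - 1 - (i : ℕ)) + (n - 1 - (i : ℕ))
          = nth A (n - 1 - (i : ℕ)) := by omega
      rw [h2]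
      exact nth_mem (hidx i hmi)
    · intro ha
      obtain ⟨c, hc, hca⟩ := nth_surj ha
      have hcn : n - 1 - c < n := by omega
      refine ⟨⟨n - 1 - c, hcn⟩, ?_, ?_⟩
      · exact hlt ⟨n - 1 - c, hcn⟩ (by simp only [Fin.val_mk]; omega)
      · have hmi : n - A.card ≤ n - 1 - c := by omega
        have hcc : n - 1 - (n - 1 - c) = c := by omega
        have := hval ⟨n - 1 - c, hcn⟩ (by simpa using hmi)
        simp only [Fin.val_mk] at this ⊢
        rw [this, hcc]
        have := nth_le hc
        omega

/-- For `n ≥ 1`, the number of inversion sequences of length `n` avoiding the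
pattern 001 equals `2^(n-1)`. -/
theorem inv_avoid_001_eq_two_pow (n : ℕ) (hn : 1 ≤ n) :
    Set.ncard {e : Fin n → ℕ | (∀ i : Fin n, e i ≤ (i : ℕ)) ∧
      ¬ ∃ i j k : Fin n, i < j ∧ j < k ∧ e i = e j ∧ e j < e k} =
    2 ^ (n - 1) := by
  classical
  set S : Set (Fin n → ℕ) := {e : Fin n → ℕ | (∀ i : Fin n, e i ≤ (i : ℕ)) ∧
      ¬ ∃ i j k : Fin n, i < j ∧ j < k ∧ e i = e j ∧ e j < e k} with hS
  set T : Set (Finset ℕ) := ↑((Finset.range (n - 1)).powerset) with hT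
  have hmapsF : Set.MapsTo (enc n) S T := by
    intro e he
    rw [hS, Set.mem_setOf_eq] at he
    rw [hT, Finset.coe_powerset, Set.mem_preimage, Set.mem_powerset_iff,
      Finset.coe_subset, Finset.subset_iff]
    intro a ha
    simp only [enc, Finset.mem_image] at ha
    obtain ⟨i, hi, rfl⟩ := ha
    rw [Finset.mem_filter] at hi
    have h1 := hi.2
    have h2 := i.isLt
    rw [Finset.mem_range]
    omega
  have hmapsG : Set.MapsTo (dec n) T S := by
    intro A hA
    rw [hT, Finset.mem_coe, Finset.mem_powerset] at hA
    obtain ⟨h1, h2, _⟩ := enc_dec hn hA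
    exact ⟨h1, h2⟩
  have hinv : Set.InvOn (dec n) (enc n) S T := by
    constructor
    · intro e he
      rw [hS, Set.mem_setOf_eq] at he
      exact dec_enc he.1 he.2
    · intro A hA
      rw [hT, Finset.mem_coe, Finset.mem_powerset] at hA
      exact (enc_dec hn hA).2.2
  have hbij : Set.BijOn (enc n) S T := Set.InvOn.bijOn hinv hmapsF hmapsG
  calc S.ncard = (enc n '' S).ncard := (Set.ncard_image_of_injOn hbij.injOn).symm
    _ = T.ncard := by rw [hbij.image_eq]
    _ = ((Finset.range (n - 1)).powerset).card := by rw [hT, Set.ncard_coe_finset]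
    _ = 2 ^ (n - 1) := by rw [Finset.card_powerset, Finset.card_range]
end main
end

section
/- The number of 011-avoiding inversion sequences of length n with exactly k zeros equals the Stirling number of the second kind S(n,k), the number of set partitions of an n-element set into k nonempty blocks. Consequently, the total number of 011-avoiding inversion sequences of length n is the Bell number B_n. -/
namespace Inv011

variable {n : ℕ}

/-- iterate `i ↦ e i - 1` down to a fixed point -/
def rt (e : Fin n → ℕ) (i : Fin n) : Fin n :=
  if h : 0 < e i ∧ e i ≤ i.val then
    rt e ⟨e i - 1, by omega⟩
  else i
termination_by i.val
decreasing_by omega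

def stp (e : Fin n → ℕ) (a b : Fin n) : Prop :=
  0 < e a ∧ e a ≤ a.val ∧ b.val = e a - 1

lemma stp_lt {e : Fin n → ℕ} {a b : Fin n} (h : stp e a b) : b < a := by
  obtain ⟨h1, h2, h3⟩ := h
  simp only [Fin.lt_def]; omega

lemma reach_le {e : Fin n → ℕ} {a b : Fin n}
    (h : Relation.ReflTransGen (stp e) a b) : b ≤ a := by
  induction h with
  | refl => exact le_refl _
  | tail _ hs ih => exact le_trans (le_of_lt (stp_lt hs)) ih

lemma reach_rt (e : Fin n → ℕ) (i : Fin n) :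
    Relation.ReflTransGen (stp e) i (rt e i) := by
  rw [rt]
  split
  · rename_i h
    exact Relation.ReflTransGen.head ⟨h.1, h.2, rfl⟩ (reach_rt e ⟨e i - 1, by omega⟩)
  · exact Relation.ReflTransGen.refl
termination_by i.val
decreasing_by omega

lemma rt_no_step (e : Fin n → ℕ) (i : Fin n) :
    ¬ (0 < e (rt e i) ∧ e (rt e i) ≤ (rt e i).val) := by
  rw [rt]
  split
  · exact rt_no_step e _
  · rename_i h; exact h
termination_by i.val
decreasing_by omega

lemma rt_step {e : Fin n → ℕ} {a b : Fin n} (h : stp e a b) : rt e a = rt e b := by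
  obtain ⟨h1, h2, h3⟩ := h
  rw [rt]
  rw [dif_pos ⟨h1, h2⟩]
  congr 1
  exact Fin.ext h3.symm

lemma rt_reach {e : Fin n → ℕ} {a b : Fin n}
    (h : Relation.ReflTransGen (stp e) a b) : rt e a = rt e b := by
  induction h with
  | refl => rfl
  | tail _ hs ih => exact ih.trans (rt_step hs)

lemma rt_zero {e : Fin n → ℕ} {i : Fin n} (h : e i = 0) : rt e i = i := by
  rw [rt, dif_neg]; omega



/-- injectivity on nonzero values -/
def Inj (e : Fin n → ℕ) : Prop := ∀ i j : Fin n, e i = e j → e i ≠ 0 → i = j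

lemma stp_inj {e : Fin n → ℕ} (he : Inj e) {a b c : Fin n}
    (h1 : stp e a c) (h2 : stp e b c) : a = b := by
  obtain ⟨p1, p2, p3⟩ := h1; obtain ⟨q1, q2, q3⟩ := h2
  exact he a b (by omega) (by omega)

lemma reach_total {e : Fin n → ℕ} (he : Inj e) {a b c : Fin n}
    (hac : Relation.ReflTransGen (stp e) a c)
    (hbc : Relation.ReflTransGen (stp e) b c) :
    Relation.ReflTransGen (stp e) a b ∨ Relation.ReflTransGen (stp e) b a := by
  induction hac using Relation.ReflTransGen.head_induction_on with
  | refl => exact Or.inr hbc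
  | head h tl ih =>
    rename_i x x'
    rcases ih with h1 | h1
    · exact Or.inl (Relation.ReflTransGen.head h h1)
    · rcases Relation.ReflTransGen.cases_tail h1 with rfl | ⟨y, hy1, hy2⟩
      · exact Or.inl (Relation.ReflTransGen.head h Relation.ReflTransGen.refl)
      · rcases stp_inj he h hy2 with rfl
        exact Or.inr hy1

lemma reach_of_rt_eq {e : Fin n → ℕ} (he : Inj e) {a b : Fin n}
    (h : rt e a = rt e b) :
    Relation.ReflTransGen (stp e) a b ∨ Relation.ReflTransGen (stp e) b a :=
  reach_total he (reach_rt e a) (h ▸ reach_rt e b)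

/-- the gap lemma: fiber elements below `i` are below `e i` -/
lemma gap {e : Fin n → ℕ} (he : Inj e) (_hle : ∀ i : Fin n, e i ≤ i.val)
    {i j : Fin n} (hr : rt e j = rt e i) (hij : j < i) : j.val < e i := by
  rcases reach_of_rt_eq he hr.symm with h | h
  · rcases Relation.ReflTransGen.cases_head h with rfl | ⟨c, hc1, hc2⟩
    · exact absurd hij (lt_irrefl _)
    · have := reach_le hc2
      obtain ⟨p1, p2, p3⟩ := hc1
      have : j.val ≤ c.val := this
      omega
  · exact absurd (reach_le h) (not_le.2 hij)

def fib (e : Fin n → ℕ) (r : Fin n) : Finset (Fin n) :=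
  Finset.univ.filter (fun j => rt e j = r)

lemma mem_fib {e : Fin n → ℕ} {r j : Fin n} : j ∈ fib e r ↔ rt e j = r := by
  simp [fib]

def phi (e : Fin n → ℕ) : Finpartition (Finset.univ : Finset (Fin n)) where
  parts := Finset.univ.image (fun i => fib e (rt e i))
  supIndep := by
    rw [Finset.supIndep_iff_pairwiseDisjoint]
    intro t ht u hu htu
    simp only [Finset.coe_image, Set.mem_image] at ht hu
    obtain ⟨a, _, rfl⟩ := ht; obtain ⟨b, _, rfl⟩ := hu
    simp only [Function.onFun, id]
    rw [Finset.disjoint_left]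
    intro x hx1 hx2
    rw [mem_fib] at hx1 hx2
    exact htu (by rw [← hx1, hx2])
  sup_parts := by
    apply le_antisymm (Finset.sup_le fun t _ => le_top)
    intro j _
    rw [Finset.mem_sup]
    exact ⟨fib e (rt e j), Finset.mem_image_of_mem _ (Finset.mem_univ j),
      mem_fib.2 rfl⟩
  bot_notMem := by
    intro h
    simp only [Finset.bot_eq_empty, Finset.mem_image] at h
    obtain ⟨a, _, ha⟩ := h
    have : a ∈ fib e (rt e a) := mem_fib.2 rfl
    rw [ha] at this
    exact absurd this (Finset.notMem_empty a)

lemma phi_parts (e : Fin n → ℕ) :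
    (phi e).parts = Finset.univ.image (fun i => fib e (rt e i)) := rfl

lemma phi_part (e : Fin n → ℕ) (i : Fin n) : (phi e).part i = fib e (rt e i) :=
  (phi e).part_eq_of_mem (Finset.mem_image_of_mem _ (Finset.mem_univ i)) (mem_fib.2 rfl)

/-- psi: partition to sequence -/
def psi (P : Finpartition (Finset.univ : Finset (Fin n))) (i : Fin n) : ℕ :=
  if h : ((P.part i).filter (· < i)).Nonempty then
    (((P.part i).filter (· < i)).max' h).val + 1
  else 0

lemma psi_le (P : Finpartition (Finset.univ : Finset (Fin n))) (i : Fin n) :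
    psi P i ≤ i.val := by
  rw [psi]
  split
  · rename_i h
    have := Finset.max'_mem _ h
    rw [Finset.mem_filter] at this
    have := this.2
    simp only [Fin.lt_def] at this
    omega
  · omega

lemma psi_inj_aux (P : Finpartition (Finset.univ : Finset (Fin n))) {i j : Fin n}
    (hlt : i < j) (hij : psi P i = psi P j) (hne : psi P i ≠ 0) : False := by
  have h1 : ((P.part i).filter (· < i)).Nonempty := by
    by_contra h; rw [psi, dif_neg h] at hne; exact hne rfl
  have h2 : ((P.part j).filter (· < j)).Nonempty := by
    by_contra h; rw [hij, psi, dif_neg h] at hne; exact hne rfl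
  rw [psi, dif_pos h1, psi, dif_pos h2] at hij
  set m1 := ((P.part i).filter (· < i)).max' h1 with hm1
  set m2 := ((P.part j).filter (· < j)).max' h2 with hm2
  have hmm : m1 = m2 := Fin.ext (by omega)
  have hm1mem := Finset.max'_mem _ h1
  have hm2mem := Finset.max'_mem _ h2
  rw [← hm1, Finset.mem_filter] at hm1mem
  rw [← hm2, Finset.mem_filter] at hm2mem
  have hpp : P.part i = P.part j :=
    P.eq_of_mem_parts (P.part_mem.2 (Finset.mem_univ i)) (P.part_mem.2 (Finset.mem_univ j))
      hm1mem.1 (hmm ▸ hm2mem.1)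
  have hi : i ∈ (P.part j).filter (· < j) := by
    rw [Finset.mem_filter]
    exact ⟨hpp ▸ P.mem_part (Finset.mem_univ i), hlt⟩
  have hle2 := Finset.le_max' _ i hi
  rw [← hm2, ← hmm] at hle2
  have hlt1 := hm1mem.2
  simp only [Fin.le_def] at hle2
  simp only [Fin.lt_def] at hlt1
  omega

lemma psi_inj (P : Finpartition (Finset.univ : Finset (Fin n))) : Inj (psi P) := by
  intro i j hij hne
  rcases lt_trichotomy i j with h | h | h
  · exact absurd (psi_inj_aux P h hij hne) id
  · exact h
  · exact absurd (psi_inj_aux P h hij.symm (hij ▸ hne)) id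

lemma rt_psi (P : Finpartition (Finset.univ : Finset (Fin n))) (i : Fin n) :
    rt (psi P) i ∈ P.part i ∧ ∀ j ∈ P.part i, rt (psi P) i ≤ j := by
  rw [rt]
  split
  · rename_i h
    have hne : psi P i ≠ 0 := by omega
    have hfn : ((P.part i).filter (· < i)).Nonempty := by
      by_contra hc; rw [psi, dif_neg hc] at hne; exact hne rfl
    set m' := ((P.part i).filter (· < i)).max' hfn with hm'
    have hmv : psi P i = m'.val + 1 := by rw [psi, dif_pos hfn]
    have hmem := Finset.max'_mem _ hfn
    rw [← hm', Finset.mem_filter] at hmem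
    have hcast : (⟨psi P i - 1, by omega⟩ : Fin n) = m' := Fin.ext (by simp; omega)
    rw [hcast]
    have hlt : m'.val < i.val := hmem.2
    have hpp : P.part m' = P.part i :=
      P.part_eq_of_mem (P.part_mem.2 (Finset.mem_univ i)) hmem.1
    have ih := rt_psi P m'
    rw [hpp] at ih
    exact ih
  · rename_i h
    refine ⟨P.mem_part (Finset.mem_univ i), fun j hj => ?_⟩
    by_contra hc
    have hji : j < i := lt_of_not_ge hc
    have hfn : ((P.part i).filter (· < i)).Nonempty :=
      ⟨j, Finset.mem_filter.2 ⟨hj, hji⟩⟩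
    have := psi_le P i
    rw [psi, dif_pos hfn] at h this
    omega
termination_by i.val

lemma rt_psi_eq_iff (P : Finpartition (Finset.univ : Finset (Fin n))) (i j : Fin n) :
    rt (psi P) j = rt (psi P) i ↔ P.part j = P.part i := by
  constructor
  · intro h
    have hj := (rt_psi P j).1
    have hi := (rt_psi P i).1
    rw [h] at hj
    exact P.eq_of_mem_parts (P.part_mem.2 (Finset.mem_univ j)) (P.part_mem.2 (Finset.mem_univ i))
      hj hi
  · intro h
    have hj := rt_psi P j
    have hi := rt_psi P i
    rw [h] at hj
    exact le_antisymm (hj.2 _ hi.1) (hi.2 _ hj.1)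

lemma fib_psi (P : Finpartition (Finset.univ : Finset (Fin n))) (i : Fin n) :
    fib (psi P) (rt (psi P) i) = P.part i := by
  ext j
  rw [mem_fib, rt_psi_eq_iff]
  constructor
  · intro h
    exact h ▸ P.mem_part (Finset.mem_univ j)
  · intro h
    exact P.part_eq_of_mem (P.part_mem.2 (Finset.mem_univ i)) h

lemma phi_psi (P : Finpartition (Finset.univ : Finset (Fin n))) :
    phi (psi P) = P := by
  apply Finpartition.ext
  rw [phi_parts]
  ext t
  simp only [Finset.mem_image, Finset.mem_univ, true_and]
  constructor
  · rintro ⟨i, rfl⟩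
    rw [fib_psi]
    exact P.part_mem.2 (Finset.mem_univ i)
  · intro ht
    obtain ⟨x, hx⟩ := P.nonempty_of_mem_parts ht
    exact ⟨x, by rw [fib_psi, P.part_eq_of_mem ht hx]⟩

lemma psi_phi {e : Fin n → ℕ} (hinj : Inj e) (hle : ∀ i : Fin n, e i ≤ i.val) :
    psi (phi e) = e := by
  funext i
  rw [psi, phi_part]
  by_cases h0 : e i = 0
  · rw [dif_neg, h0]
    rintro ⟨j, hj⟩
    rw [Finset.mem_filter, mem_fib] at hj
    have := gap hinj hle hj.1 hj.2
    omega
  · have hlt : e i - 1 < n := by have := hle i; have := i.2; omega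
    set m : Fin n := ⟨e i - 1, hlt⟩ with hm
    have hstp : stp e i m := ⟨by omega, hle i, rfl⟩
    have hmf : m ∈ (fib e (rt e i)).filter (· < i) := by
      rw [Finset.mem_filter, mem_fib]
      exact ⟨(rt_step hstp).symm, by simp [Fin.lt_def, hm]; have := hle i; omega⟩
    have hfn : ((fib e (rt e i)).filter (· < i)).Nonempty := ⟨m, hmf⟩
    rw [dif_pos hfn]
    set M := ((fib e (rt e i)).filter (· < i)).max' hfn with hM
    have hMmem := Finset.max'_mem _ hfn
    rw [← hM, Finset.mem_filter, mem_fib] at hMmem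
    have h1 : M.val < e i := gap hinj hle hMmem.1 hMmem.2
    have h2 : m ≤ M := Finset.le_max' _ m hmf
    simp only [Fin.le_def, hm] at h2
    omega

lemma phi_parts_card {e : Fin n → ℕ} (hle : ∀ i : Fin n, e i ≤ i.val) :
    (phi e).parts.card = (Finset.univ.filter (fun i => e i = 0)).card := by
  have himg : (phi e).parts = (Finset.univ.filter (fun i => e i = 0)).image (fib e) := by
    rw [phi_parts]
    ext t
    simp only [Finset.mem_image, Finset.mem_univ, true_and, Finset.mem_filter]
    constructor
    · rintro ⟨i, rfl⟩
      refine ⟨rt e i, ?_, rfl⟩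
      have h1 := rt_no_step e i
      have h2 := hle (rt e i)
      omega
    · rintro ⟨z, hz, rfl⟩
      exact ⟨z, by rw [rt_zero hz]⟩
  rw [himg]
  apply Finset.card_image_of_injOn
  intro z1 hz1 z2 hz2 hf
  have : z1 ∈ fib e z2 := by
    rw [← hf, mem_fib]
    exact rt_zero (Finset.mem_filter.1 hz1).2
  rw [mem_fib, rt_zero (Finset.mem_filter.1 hz1).2] at this
  exact this

lemma avoid_iff {e : Fin n → ℕ} (hle : ∀ i : Fin n, e i ≤ i.val) :
    (¬ ∃ i j l : Fin n, i < j ∧ j < l ∧ e i < e j ∧ e j = e l) ↔ Inj e := by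
  constructor
  · intro h i j hij hne
    by_contra hij2
    apply h
    have h0n : 0 < n := i.pos
    rcases lt_trichotomy i j with hlt | heq | hlt
    · have hipos : 0 < i.val := by have := hle i; omega
      have h00 : e ⟨0, h0n⟩ = 0 := by have := hle ⟨0, h0n⟩; simpa using this
      exact ⟨⟨0, h0n⟩, i, j, by simpa [Fin.lt_def] using hipos, hlt, by omega, hij⟩
    · exact absurd heq hij2
    · have hjpos : 0 < j.val := by have := hle j; rw [hij] at hne; omega
      have h00 : e ⟨0, h0n⟩ = 0 := by have := hle ⟨0, h0n⟩; simpa using this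
      exact ⟨⟨0, h0n⟩, j, i, by simpa [Fin.lt_def] using hjpos, hlt, by rw [← hij]; omega,
        hij.symm⟩
  · rintro h ⟨i, j, l, h1, h2, h3, h4⟩
    have hne : e j ≠ 0 := by omega
    exact absurd (h j l h4 hne) (ne_of_lt h2)

lemma zeros_ncard (e : Fin n → ℕ) :
    Set.ncard {i : Fin n | e i = 0} = (Finset.univ.filter (fun i => e i = 0)).card := by
  rw [← Set.ncard_coe_finset]
  congr 1
  ext i
  simp

end Inv011

open Inv011

/-- The number of 011-avoiding inversion sequences of length `n` with exactly
`k` zeros equals the Stirling number of the second kind `S(n,k)` (the number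
of set partitions of an `n`-element set into `k` nonempty blocks);
consequently, the total number of 011-avoiding inversion sequences of length
`n` is the Bell number `B_n` (the number of set partitions of an `n`-element
set). -/
theorem inv_avoid_011_stirling_bell (n : ℕ) :
    (∀ k : ℕ,
      Set.ncard {e : Fin n → ℕ | (∀ i : Fin n, e i ≤ (i : ℕ)) ∧
        (¬ ∃ i j l : Fin n, i < j ∧ j < l ∧ e i < e j ∧ e j = e l) ∧
        Set.ncard {i : Fin n | e i = 0} = k} =
      Set.ncard {P : Finpartition (Finset.univ : Finset (Fin n)) |
        P.parts.card = k}) ∧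
    Set.ncard {e : Fin n → ℕ | (∀ i : Fin n, e i ≤ (i : ℕ)) ∧
      ¬ ∃ i j l : Fin n, i < j ∧ j < l ∧ e i < e j ∧ e j = e l} =
    Nat.card (Finpartition (Finset.univ : Finset (Fin n))) := by
  constructor
  · intro k
    have himg : {P : Finpartition (Finset.univ : Finset (Fin n)) | P.parts.card = k} =
        phi '' {e : Fin n → ℕ | (∀ i : Fin n, e i ≤ (i : ℕ)) ∧
          (¬ ∃ i j l : Fin n, i < j ∧ j < l ∧ e i < e j ∧ e j = e l) ∧
          Set.ncard {i : Fin n | e i = 0} = k} := by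
      ext P
      simp only [Set.mem_setOf_eq, Set.mem_image]
      constructor
      · intro hP
        refine ⟨psi P, ⟨psi_le P, (avoid_iff (psi_le P)).2 (psi_inj P), ?_⟩, phi_psi P⟩
        rw [zeros_ncard, ← phi_parts_card (psi_le P), phi_psi P, hP]
      · rintro ⟨e, ⟨h1, h2, h3⟩, rfl⟩
        rw [phi_parts_card h1, ← zeros_ncard, h3]
    rw [himg]
    rw [Set.ncard_image_of_injOn]
    intro e1 he1 e2 he2 hphie
    have := psi_phi ((avoid_iff he1.1).1 he1.2.1) he1.1
    rw [hphie, psi_phi ((avoid_iff he2.1).1 he2.2.1) he2.1] at this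
    exact this.symm
  · have himg : (Set.univ : Set (Finpartition (Finset.univ : Finset (Fin n)))) =
        phi '' {e : Fin n → ℕ | (∀ i : Fin n, e i ≤ (i : ℕ)) ∧
          ¬ ∃ i j l : Fin n, i < j ∧ j < l ∧ e i < e j ∧ e j = e l} := by
      ext P
      simp only [Set.mem_univ, true_iff, Set.mem_image, Set.mem_setOf_eq]
      exact ⟨psi P, ⟨psi_le P, (avoid_iff (psi_le P)).2 (psi_inj P)⟩, phi_psi P⟩
    rw [← Set.ncard_univ, himg, Set.ncard_image_of_injOn]
    intro e1 he1 e2 he2 hphie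
    have := psi_phi ((avoid_iff he1.1).1 he1.2) he1.1
    rw [hphie, psi_phi ((avoid_iff he2.1).1 he2.2) he2.1] at this
    exact this.symm
end

section
/- For all n ≥ 1, the number of inversion sequences of length n avoiding the pattern 101 equals the number avoiding the pattern 110. -/
open List

/-- pattern 101 as a subsequence condition -/
def pat101 (l : List ℕ) : Prop := ∃ a x : ℕ, x < a ∧ [a, x, a] <+ l
/-- pattern 110 as a subsequence condition -/
def pat110 (l : List ℕ) : Prop := ∃ a x : ℕ, x < a ∧ [a, a, x] <+ l

/-- Finset of lists pointwise ≤ the bound list `b`. -/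
def listsLE : List ℕ → Finset (List ℕ)
  | [] => {[]}
  | y :: b => (Finset.range (y+1)).biUnion fun v => (listsLE b).image (v :: ·)

lemma mem_listsLE {b l : List ℕ} : l ∈ listsLE b ↔ Forall₂ (· ≤ ·) l b := by
  induction b generalizing l with
  | nil =>
    simp only [listsLE, Finset.mem_singleton]
    constructor
    · rintro rfl; exact Forall₂.nil
    · intro h; cases h; rfl
  | cons y b ih =>
    simp only [listsLE, Finset.mem_biUnion, Finset.mem_image, Finset.mem_range]
    constructor
    · rintro ⟨v, hv, w, hw, rfl⟩
      exact Forall₂.cons (Nat.lt_succ_iff.mp hv) (ih.mp hw)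
    · intro h
      cases h with
      | cons h1 h2 => exact ⟨_, Nat.lt_succ_of_le h1, _, ih.mpr h2, rfl⟩

noncomputable def AvA (b : List ℕ) : Finset (List ℕ) :=
  @Finset.filter _ (fun l => ¬ pat101 l) (Classical.decPred _) (listsLE b)

noncomputable def AvB (b : List ℕ) : Finset (List ℕ) :=
  @Finset.filter _ (fun l => ¬ pat110 l) (Classical.decPred _) (listsLE b)

lemma mem_AvA {b l : List ℕ} : l ∈ AvA b ↔ Forall₂ (· ≤ ·) l b ∧ ¬ pat101 l := by
  rw [AvA, @Finset.mem_filter _ _ (Classical.decPred _), mem_listsLE]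

lemma mem_AvB {b l : List ℕ} : l ∈ AvB b ↔ Forall₂ (· ≤ ·) l b ∧ ¬ pat110 l := by
  rw [AvB, @Finset.mem_filter _ _ (Classical.decPred _), mem_listsLE]

/-- maximum of a list of naturals -/
def mx (l : List ℕ) : ℕ := l.foldr max 0

lemma le_mx {l : List ℕ} {x : ℕ} (h : x ∈ l) : x ≤ mx l := by
  induction l with
  | nil => cases h
  | cons a t ih =>
    rcases mem_cons.mp h with rfl | h
    · exact le_max_left _ _
    · exact le_trans (ih h) (le_max_right _ _)

lemma mx_le {l : List ℕ} {K : ℕ} (h : ∀ x ∈ l, x ≤ K) : mx l ≤ K := by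
  induction l with
  | nil => exact Nat.zero_le K
  | cons a t ih =>
    exact max_le (h a (mem_cons_self)) (ih fun x hx => h x (mem_cons_of_mem _ hx))

lemma mx_mem {l : List ℕ} (h : l ≠ []) : mx l ∈ l := by
  induction l with
  | nil => exact absurd rfl h
  | cons a t ih =>
    rcases eq_or_ne t [] with rfl | ht
    · simp [mx]
    · show max a (mx t) ∈ a :: t
      rcases max_cases a (mx t) with ⟨h1, _⟩ | ⟨h1, _⟩
      · rw [h1]; exact mem_cons_self
      · rw [h1]; exact mem_cons_of_mem _ (ih ht)

lemma mx_append {l₁ l₂ : List ℕ} : mx (l₁ ++ l₂) = max (mx l₁) (mx l₂) := by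
  induction l₁ with
  | nil => simp [mx]
  | cons a t ih => simp [mx, List.foldr_cons] at *; omega

lemma mx_replicate {m M : ℕ} (h : 1 ≤ m) : mx (replicate m M) = M := by
  induction m with
  | zero => omega
  | succ k ih =>
    rcases Nat.eq_or_lt_of_le h with h' | h'
    · simp [← h', mx]
    · rw [replicate_succ]
      show max M (mx (replicate k M)) = M
      rw [ih (by omega)]; exact max_self M

lemma pat101_sublist {l l' : List ℕ} (h : l <+ l') : pat101 l → pat101 l' := by
  rintro ⟨a, x, hx, hs⟩; exact ⟨a, x, hx, hs.trans h⟩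

lemma pat110_sublist {l l' : List ℕ} (h : l <+ l') : pat110 l → pat110 l' := by
  rintro ⟨a, x, hx, hs⟩; exact ⟨a, x, hx, hs.trans h⟩

lemma forall₂_le_replicate_right {l : List ℕ} {K : ℕ} (h : ∀ x ∈ l, x ≤ K) :
    Forall₂ (· ≤ ·) l (replicate l.length K) := by
  induction l with
  | nil => exact Forall₂.nil
  | cons a t ih =>
    exact Forall₂.cons (h a (mem_cons_self)) (ih fun x hx => h x (mem_cons_of_mem _ hx))

lemma forall₂_le_replicate_left {r : List ℕ} {K : ℕ} (h : ∀ y ∈ r, K ≤ y) :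
    Forall₂ (· ≤ ·) (replicate r.length K) r := by
  induction r with
  | nil => exact Forall₂.nil
  | cons a t ih =>
    exact Forall₂.cons (h a (mem_cons_self)) (ih fun x hx => h x (mem_cons_of_mem _ hx))

lemma forall₂_le_trans {l m r : List ℕ} (h1 : Forall₂ (· ≤ ·) l m) (h2 : Forall₂ (· ≤ ·) m r) :
    Forall₂ (· ≤ ·) l r := by
  induction h1 generalizing r with
  | nil => cases h2; exact Forall₂.nil
  | cons ha ht ih =>
    cases h2 with
    | cons hb hr => exact Forall₂.cons (le_trans ha hb) (ih hr)

lemma forall₂_mem_left {l r : List ℕ} {x : ℕ} (h : Forall₂ (· ≤ ·) l r) (hx : x ∈ l) :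
    ∃ y ∈ r, x ≤ y := by
  induction h with
  | nil => cases hx
  | cons ha _ ih =>
    rcases mem_cons.mp hx with rfl | hx'
    · exact ⟨_, mem_cons_self, ha⟩
    · obtain ⟨y, hy, hxy⟩ := ih hx'
      exact ⟨y, mem_cons_of_mem _ hy, hxy⟩
section Part2
open List

variable {M : ℕ} {e : List ℕ}

def preL (M : ℕ) (e : List ℕ) : List ℕ := e.takeWhile (fun x => decide (x ≠ M))
def restL (M : ℕ) (e : List ℕ) : List ℕ := e.dropWhile (fun x => decide (x ≠ M))
def tailQ (M : ℕ) (e : List ℕ) : List ℕ := (restL M e).dropWhile (fun x => decide (x = M))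
def midW (M : ℕ) (e : List ℕ) : List ℕ := ((restL M e).tail).takeWhile (fun x => decide (x ≠ M))
def wA (M : ℕ) (e : List ℕ) : List ℕ := preL M e ++ tailQ M e
def wB (M : ℕ) (e : List ℕ) : List ℕ := preL M e ++ midW M e

lemma not_mem_preL : M ∉ preL M e := by
  intro h
  have := mem_takeWhile_imp h
  simp at this

lemma not_mem_midW : M ∉ midW M e := by
  intro h
  have := mem_takeWhile_imp h
  simp at this

lemma pre_append_rest : preL M e ++ restL M e = e := takeWhile_append_dropWhile

lemma dropWhile_head_false {p : ℕ → Bool} {l x : List ℕ} {c : ℕ} (h : l.dropWhile p = c :: x) :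
    p c = false := by
  induction l with
  | nil => simp at h
  | cons a t ih =>
    rw [dropWhile_cons] at h
    by_cases hp : p a
    · rw [if_pos hp] at h; exact ih h
    · rw [if_neg hp] at h
      cases h; simpa using hp

lemma restL_cons (hM : M ∈ e) : restL M e = M :: (restL M e).tail := by
  have hmem : M ∈ restL M e := by
    have he : preL M e ++ restL M e = e := pre_append_rest
    rw [← he] at hM
    rcases mem_append.mp hM with h | h
    · exact absurd h not_mem_preL
    · exact h
  cases h : restL M e with
  | nil => rw [h] at hmem; cases hmem
  | cons c x =>
    have := dropWhile_head_false h
    simp only [decide_eq_false_iff_not, not_not] at this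
    rw [this]; rfl

lemma takeWhile_eq_self_of {p : ℕ → Bool} {l : List ℕ} (h : ∀ x ∈ l, p x) :
    l.takeWhile p = l := by
  have : l.dropWhile p = [] := dropWhile_eq_nil_iff.mpr h
  have h2 := takeWhile_append_dropWhile (p := p) (l := l)
  rw [this, append_nil] at h2; exact h2

lemma takeWhile_append_all {p : ℕ → Bool} {l₁ l₂ : List ℕ} (h : ∀ x ∈ l₁, p x) :
    (l₁ ++ l₂).takeWhile p = l₁ ++ l₂.takeWhile p := by
  rw [takeWhile_append, takeWhile_eq_self_of h, if_pos rfl]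

lemma dropWhile_append_all {p : ℕ → Bool} {l₁ l₂ : List ℕ} (h : ∀ x ∈ l₁, p x) :
    (l₁ ++ l₂).dropWhile p = l₂.dropWhile p := by
  rw [dropWhile_append, dropWhile_eq_nil_iff.mpr h]; rfl

lemma struct101 (hav : ¬ pat101 e) (hle : ∀ x ∈ e, x ≤ M) (hM : M ∈ e) :
    e = preL M e ++ replicate (e.count M) M ++ tailQ M e ∧ M ∉ tailQ M e := by
  set P := preL M e with hP
  set R := restL M e with hR
  have hRc : R = M :: R.tail := restL_cons hM
  have hQt : tailQ M e = (R.tail).dropWhile (fun x => decide (x = M)) := by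
    rw [tailQ, ← hR]
    conv_lhs => rw [hRc]
    rw [dropWhile_cons, if_pos (by simp)]
  have hQsub : tailQ M e <+ R.tail := hQt ▸ dropWhile_sublist _
  have hRsub : R <+ e := dropWhile_sublist _
  -- M ∉ Q
  have hMQ : M ∉ tailQ M e := by
    intro hmem
    cases hq : tailQ M e with
    | nil => rw [hq] at hmem; cases hmem
    | cons y q =>
      have hy : y ≠ M := by
        have := dropWhile_head_false (hQt ▸ hq : (R.tail).dropWhile _ = y :: q)
        simpa using this
      have hyM : y < M := lt_of_le_of_ne (hle y (hRsub.subset (hRc ▸ (mem_cons_of_mem M ((hq ▸ hQsub).subset ((mem_cons_self (a := y) (l := q)))))))) hy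
      have hMq : M ∈ q := by
        rcases mem_cons.mp (hq ▸ hmem) with h | h
        · exact absurd h.symm hy
        · exact h
      have hs1 : [y, M] <+ tailQ M e := by
        rw [hq]; exact (singleton_sublist.mpr hMq).cons₂ y
      have hs2 : [M, y, M] <+ e :=
        ((hs1.trans hQsub).cons₂ M).trans (hRc ▸ hRsub)
      exact hav ⟨M, y, hyM, hs2⟩
  -- middle block
  have hK : R.takeWhile (fun x => decide (x = M)) = replicate (e.count M) M := by
    rw [eq_replicate_iff]
    constructor
    · have he : e = P ++ R := (pre_append_rest).symm
      have hcount : e.count M = R.count M := by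
        rw [he, count_append, count_eq_zero.mpr (hP ▸ not_mem_preL), Nat.zero_add]
      have hRKQ : R = R.takeWhile (fun x => decide (x = M)) ++ tailQ M e := by
        rw [tailQ, ← hR, takeWhile_append_dropWhile]
      have : R.count M = (R.takeWhile (fun x => decide (x = M))).count M + (tailQ M e).count M := by
        conv_lhs => rw [hRKQ]
        exact count_append
      rw [count_eq_zero.mpr hMQ, Nat.add_zero] at this
      have hall : ∀ b ∈ R.takeWhile (fun x => decide (x = M)), M = b := by
        intro b hb; have := mem_takeWhile_imp hb; simp at this; omega
      rw [count_eq_length.mpr hall] at this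
      omega
    · intro x hx; have := mem_takeWhile_imp hx; simpa using this
  refine ⟨?_, hMQ⟩
  have hRKQ : R = replicate (e.count M) M ++ tailQ M e := by
    rw [← hK, tailQ, ← hR, takeWhile_append_dropWhile]
  calc e = P ++ R := (pre_append_rest).symm
    _ = P ++ (replicate (e.count M) M ++ tailQ M e) := by rw [← hRKQ]
    _ = preL M e ++ replicate (e.count M) M ++ tailQ M e := by rw [hP, append_assoc]

lemma struct110 (hav : ¬ pat110 e) (hle : ∀ x ∈ e, x ≤ M) (hM : M ∈ e) :
    e = preL M e ++ [M] ++ midW M e ++ replicate (e.count M - 1) M ∧ M ∉ midW M e ∧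
      1 ≤ e.count M := by
  set P := preL M e with hP
  set R := restL M e with hR
  have hRc : R = M :: R.tail := restL_cons hM
  set t := R.tail with ht
  set s := t.dropWhile (fun x => decide (x ≠ M)) with hs
  have hRsub : R <+ e := dropWhile_sublist _
  have hssub : s <+ t := dropWhile_sublist _
  -- all elements of s equal M
  have hsall : ∀ z ∈ s, z = M := by
    intro z hz
    by_contra hzM
    cases hsc : s with
    | nil => rw [hsc] at hz; cases hz
    | cons y s' =>
      have hy : y = M := by
        have := dropWhile_head_false (hs ▸ hsc : t.dropWhile _ = y :: s')
        simpa using this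
      have hzs' : z ∈ s' := by
        rcases mem_cons.mp (hsc ▸ hz) with h | h
        · exact absurd (h.trans hy) hzM
        · exact h
      have hzlt : z < M :=
        lt_of_le_of_ne (hle z (hRsub.subset (hRc ▸ mem_cons_of_mem M (hssub.subset hz)))) hzM
      have hs1 : [M, z] <+ s := by
        rw [hsc, hy]; exact (singleton_sublist.mpr hzs').cons₂ M
      have hs2 : [M, M, z] <+ e := ((hs1.trans hssub).cons₂ M).trans (hRc ▸ hRsub)
      exact hav ⟨M, z, hzlt, hs2⟩
  have hcount : e.count M = 1 + s.length := by
    have he : e = P ++ R := (pre_append_rest).symm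
    have h1 : e.count M = R.count M := by
      rw [he, count_append, count_eq_zero.mpr (hP ▸ not_mem_preL), Nat.zero_add]
    have h2 : R.count M = 1 + t.count M := by
      conv_lhs => rw [hRc]
      rw [count_cons_self]; omega
    have h3 : t = midW M e ++ s := by
      rw [midW, ← hR, ← ht, hs, takeWhile_append_dropWhile]
    have h4 : t.count M = s.length := by
      rw [h3, count_append, count_eq_zero.mpr (by
        intro hmem; have := mem_takeWhile_imp hmem; simp at this), Nat.zero_add]
      exact count_eq_length.mpr fun b hb => (hsall b hb).symm
    omega
  have hsrep : s = replicate (e.count M - 1) M := by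
    rw [eq_replicate_iff]
    exact ⟨by omega, hsall⟩
  refine ⟨?_, by
    intro hmem; have := mem_takeWhile_imp hmem; simp at this, by omega⟩
  have h3 : t = midW M e ++ s := by
    rw [midW, ← hR, ← ht, hs, takeWhile_append_dropWhile]
  calc e = P ++ R := (pre_append_rest).symm
    _ = P ++ (M :: (midW M e ++ s)) := by rw [hRc, ← h3]
    _ = preL M e ++ [M] ++ midW M e ++ replicate (e.count M - 1) M := by
        rw [hP, ← hsrep]; simp [append_assoc]

end Part2
section Part3
open List

def p0 (b : List ℕ) (M : ℕ) : ℕ := (b.takeWhile (fun x => decide (x < M))).length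

def cvec (b : List ℕ) (M m : ℕ) : List ℕ :=
  b.takeWhile (fun x => decide (x < M)) ++ replicate (b.length - m - p0 b M) (M-1)

def idxS (b : List ℕ) : Finset (ℕ × ℕ × ℕ) :=
  ((Finset.range (mx b + 1)) ×ˢ (Finset.range (b.length+1)) ×ˢ (Finset.range (b.length+1))).filter
    (fun t => 1 ≤ t.2.1 ∧ p0 b t.1 ≤ t.2.2 ∧ t.2.2 + t.2.1 ≤ b.length ∧
      (t.1 = 0 → t.2.1 = b.length))

lemma mem_idxS {b : List ℕ} {t : ℕ × ℕ × ℕ} :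
    t ∈ idxS b ↔ t.1 ≤ mx b ∧ 1 ≤ t.2.1 ∧ p0 b t.1 ≤ t.2.2 ∧ t.2.2 + t.2.1 ≤ b.length ∧
      (t.1 = 0 → t.2.1 = b.length) := by
  obtain ⟨M, m, p⟩ := t
  simp only [idxS, Finset.mem_filter, Finset.mem_product, Finset.mem_range]
  constructor
  · rintro ⟨⟨h1, h2, h3⟩, h4⟩
    exact ⟨by omega, h4.1, h4.2.1, h4.2.2.1, h4.2.2.2⟩
  · rintro ⟨h1, h2, h3, h4, h5⟩
    exact ⟨⟨by omega, by omega, by omega⟩, h2, h3, h4, h5⟩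

lemma mem_idxS' {b : List ℕ} {M m p : ℕ} :
    (M, m, p) ∈ idxS b ↔ M ≤ mx b ∧ 1 ≤ m ∧ p0 b M ≤ p ∧ p + m ≤ b.length ∧
      (M = 0 → m = b.length) := mem_idxS

variable {b : List ℕ} {M m : ℕ}

lemma takeWhile_lt_eq_take : b.takeWhile (fun x => decide (x < M)) = take (p0 b M) b :=
  prefix_iff_eq_take.mp (takeWhile_prefix _)

lemma p0_le_length : p0 b M ≤ b.length := (takeWhile_prefix _).sublist.length_le

lemma dropWhile_lt_eq_drop : b.dropWhile (fun x => decide (x < M)) = drop (p0 b M) b := by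
  have h := takeWhile_append_dropWhile (p := fun x => decide (x < M)) (l := b)
  have := drop_left' (l₂ := b.dropWhile (fun x => decide (x < M))) (rfl : (b.takeWhile (fun x => decide (x < M))).length = p0 b M)
  rw [h] at this
  exact this.symm

lemma mem_drop_p0_ge (hs : Pairwise (· ≤ ·) b) {y : ℕ} (hy : y ∈ b.drop (p0 b M)) : M ≤ y := by
  rw [← dropWhile_lt_eq_drop] at hy
  cases h : b.dropWhile (fun x => decide (x < M)) with
  | nil => rw [h] at hy; cases hy
  | cons c x =>
    have hc : ¬ (c < M) := by
      have := dropWhile_head_false h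
      simpa using this
    have hsor : Pairwise (· ≤ ·) (c :: x) := h ▸ hs.sublist (dropWhile_sublist _)
    rw [h] at hy
    rcases mem_cons.mp hy with rfl | hy'
    · omega
    · have := rel_of_pairwise_cons hsor hy'
      omega

lemma getElem_lt_of_lt_p0 {i : ℕ} (h : i < p0 b M) (hi : i < b.length) : b[i] < M := by
  have hlen : i < (b.takeWhile (fun x => decide (x < M))).length := h
  have hmem : (b.takeWhile (fun x => decide (x < M)))[i] ∈ b.takeWhile (fun x => decide (x < M)) :=
    getElem_mem _
  have hpred := mem_takeWhile_imp hmem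
  have heq : (b.takeWhile (fun x => decide (x < M)))[i] = b[i] := by
    rw [List.getElem_of_eq takeWhile_lt_eq_take, getElem_take]
  rw [heq] at hpred
  simpa using hpred

lemma p0_le_of_ge {i : ℕ} (hi : i < b.length) (h : M ≤ b[i]) : p0 b M ≤ i := by
  by_contra hc
  have := getElem_lt_of_lt_p0 (show i < p0 b M by omega) hi
  omega

lemma forall₂_append' {R : ℕ → ℕ → Prop} {l₁ l₂ r₁ r₂ : List ℕ}
    (h1 : Forall₂ R l₁ r₁) (h2 : Forall₂ R l₂ r₂) : Forall₂ R (l₁ ++ l₂) (r₁ ++ r₂) := by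
  induction h1 with
  | nil => exact h2
  | cons ha _ ih => exact Forall₂.cons ha ih

lemma length_cvec : (cvec b M m).length = p0 b M + (b.length - m - p0 b M) := by
  simp [cvec, p0]

lemma cvec_sorted (hs : Pairwise (· ≤ ·) b) : Pairwise (· ≤ ·) (cvec b M m) := by
  rw [cvec, pairwise_append]
  refine ⟨hs.sublist (takeWhile_prefix _).sublist, ?_, ?_⟩
  · rw [pairwise_replicate]; right; exact le_refl _
  · intro x hx y hy
    have hxM := mem_takeWhile_imp hx
    have hyM := eq_of_mem_replicate hy
    simp only [decide_eq_true_iff] at hxM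
    omega

lemma mem_cvec_lt (hM : 1 ≤ M) {x : ℕ} (hx : x ∈ cvec b M m) : x < M := by
  rw [cvec, mem_append] at hx
  rcases hx with h | h
  · have := mem_takeWhile_imp h; simpa using this
  · have := eq_of_mem_replicate h; omega

lemma lt_of_forall₂_le_cvec {w : List ℕ} (h : Forall₂ (· ≤ ·) w (cvec b M m)) (hM : 1 ≤ M)
    {x : ℕ} (hx : x ∈ w) : x < M := by
  obtain ⟨y, hy, hxy⟩ := forall₂_mem_left h hx
  exact lt_of_le_of_lt hxy (mem_cvec_lt hM hy)

/-- generic upper bound: cvec is pointwise ≤ the takeWhile-part ++ any tail of big entries. -/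
lemma cvec_le_aux {tail : List ℕ} (hlen : tail.length = b.length - m - p0 b M)
    (htail : ∀ y ∈ tail, M ≤ y) :
    Forall₂ (· ≤ ·) (cvec b M m) (b.takeWhile (fun x => decide (x < M)) ++ tail) := by
  rw [cvec]
  refine forall₂_append' (forall₂_same.mpr fun x _ => le_refl x) ?_
  have : b.length - m - p0 b M = tail.length := hlen.symm
  rw [this]
  exact forall₂_le_replicate_left fun y hy => le_trans (Nat.sub_le M 1) (htail y hy)

lemma cvec_le_delA (hs : Pairwise (· ≤ ·) b) {p : ℕ} (hp0 : p0 b M ≤ p) (hm : 1 ≤ m)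
    (hpm : p + m ≤ b.length) :
    Forall₂ (· ≤ ·) (cvec b M m) (take p b ++ drop (p + m) b) := by
  have hsplit : take p b ++ drop (p + m) b =
      b.takeWhile (fun x => decide (x < M)) ++ (drop (p0 b M) (take p b) ++ drop (p + m) b) := by
    rw [takeWhile_lt_eq_take, ← append_assoc]
    congr 1
    have h1 : take (p0 b M) (take p b) = take (p0 b M) b := by
      rw [take_take, min_eq_left hp0]
    rw [← h1, take_append_drop]
  rw [hsplit]
  apply cvec_le_aux
  · simp only [length_append, length_drop, length_take]
    omega
  · intro y hy
    rcases mem_append.mp hy with h | h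
    · rw [drop_take] at h
      exact mem_drop_p0_ge hs ((take_subset _ _) h)
    · have : y ∈ drop (p0 b M) b := by
        have h2 : drop (p0 b M + (p + m - p0 b M)) b = drop (p + m) b := by congr 1; omega
        rw [← h2, ← drop_drop] at h
        exact drop_subset _ _ h
      exact mem_drop_p0_ge hs this

lemma cvec_le_delB (hs : Pairwise (· ≤ ·) b) {p : ℕ} (hp0 : p0 b M ≤ p) (hm : 1 ≤ m)
    (hpm : p + m ≤ b.length) :
    Forall₂ (· ≤ ·) (cvec b M m) (take p b ++ take (b.length - m - p) (drop (p + 1) b)) := by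
  have hsplit : take p b ++ take (b.length - m - p) (drop (p + 1) b) =
      b.takeWhile (fun x => decide (x < M)) ++
        (drop (p0 b M) (take p b) ++ take (b.length - m - p) (drop (p + 1) b)) := by
    rw [takeWhile_lt_eq_take, ← append_assoc]
    congr 1
    have h1 : take (p0 b M) (take p b) = take (p0 b M) b := by
      rw [take_take, min_eq_left hp0]
    rw [← h1, take_append_drop]
  rw [hsplit]
  apply cvec_le_aux
  · simp only [length_append, length_drop, length_take]
    omega
  · intro y hy
    rcases mem_append.mp hy with h | h
    · rw [drop_take] at h
      exact mem_drop_p0_ge hs ((take_subset _ _) h)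
    · have : y ∈ drop (p0 b M) b := by
        have h2 : drop (p0 b M + (p + 1 - p0 b M)) b = drop (p + 1) b := by congr 1; omega
        have h3 := take_subset (b.length - m - p) (drop (p + 1) b) h
        rw [← h2, ← drop_drop] at h3
        exact drop_subset _ _ h3
      exact mem_drop_p0_ge hs this

lemma replicate_le_seg (hs : Pairwise (· ≤ ·) b) {p k : ℕ} (hp0 : p0 b M ≤ p)
    (hpk : p + k ≤ b.length) :
    Forall₂ (· ≤ ·) (replicate k M) (take k (drop p b)) := by
  have hlen : (take k (drop p b)).length = k := by simp; omega
  have hmem : ∀ y ∈ take k (drop p b), M ≤ y := by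
    intro y hy
    have h2 : drop (p0 b M + (p - p0 b M)) b = drop p b := by congr 1; omega
    have h3 := take_subset k (drop p b) hy
    rw [← h2, ← drop_drop] at h3
    exact mem_drop_p0_ge hs (drop_subset _ _ h3)
  have h := forall₂_le_replicate_left hmem
  rw [hlen] at h
  exact h

lemma replicate_le_dropseg (hs : Pairwise (· ≤ ·) b) {q k : ℕ} (hp0 : p0 b M ≤ q)
    (hqk : q + k = b.length) :
    Forall₂ (· ≤ ·) (replicate k M) (drop q b) := by
  have hlen : (drop q b).length = k := by simp; omega
  have hmem : ∀ y ∈ drop q b, M ≤ y := by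
    intro y hy
    have h2 : drop (p0 b M + (q - p0 b M)) b = drop q b := by congr 1; omega
    rw [← h2, ← drop_drop] at hy
    exact mem_drop_p0_ge hs (drop_subset _ _ hy)
  have h := forall₂_le_replicate_left hmem
  rw [hlen] at h
  exact h

end Part3
section Part4
open List

lemma sublist_singleton' {l : List ℕ} {c : ℕ} (h : l <+ [c]) : l = [] ∨ l = [c] := by
  cases h with
  | cons _ h' => left; exact sublist_nil.mp h'
  | cons_cons _ h' => right; rw [sublist_nil.mp h']

lemma patA_recon {u₁ u₂ : List ℕ} {M m : ℕ}
    (h₁ : ∀ z ∈ u₁, z < M) (h₂ : ∀ z ∈ u₂, z < M)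
    (hav : ¬ pat101 (u₁ ++ u₂)) :
    ¬ pat101 (u₁ ++ replicate m M ++ u₂) := by
  rintro ⟨a, x, hx, hs⟩
  rw [append_assoc] at hs
  by_cases ha : a = M
  · rw [ha] at hx hs
    obtain ⟨l₁, l₂, h12, hsl₁, hsl₂⟩ := sublist_append_iff.mp hs
    have hl₁ : l₁ = [] := by
      cases l₁ with
      | nil => rfl
      | cons c t =>
        rw [cons_append] at h12
        injection h12 with hc _
        exact absurd (h₁ c (hsl₁.subset (mem_cons_self))) (by omega)
    rw [hl₁, nil_append] at h12; rw [← h12] at hsl₂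
    obtain ⟨l₃, l₄, h34, hsl₃, hsl₄⟩ := sublist_append_iff.mp hsl₂
    have h3 : ∀ z ∈ l₃, z = M := fun z hz => eq_of_mem_replicate (hsl₃.subset hz)
    have h4 : ∀ z ∈ l₄, z < M := fun z hz => h₂ _ (hsl₄.subset hz)
    cases l₃ with
    | nil =>
      simp only [nil_append] at h34
      have : M ∈ l₄ := by rw [← h34]; exact mem_cons_self
      exact absurd (h4 M this) (by omega)
    | cons c3 t3 =>
      cases t3 with
      | nil =>
        rw [cons_append, nil_append] at h34
        injection h34 with hc h34'
        have : M ∈ l₄ := by rw [← h34']; exact mem_cons_of_mem _ (mem_cons_self)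
        exact absurd (h4 M this) (by omega)
      | cons c4 t4 =>
        rw [cons_append, cons_append] at h34
        injection h34 with hc h34'
        injection h34' with hc4 _
        have : c4 = M := h3 c4 (mem_cons_of_mem _ (mem_cons_self))
        omega
  · have haM : a < M := by
      have hmem : a ∈ u₁ ++ (replicate m M ++ u₂) := hs.subset (mem_cons_self)
      rcases mem_append.mp hmem with h | h
      · exact h₁ a h
      · rcases mem_append.mp h with h' | h'
        · exact absurd (eq_of_mem_replicate h') ha
        · exact h₂ a h'
    apply hav
    refine ⟨a, x, hx, ?_⟩
    have hfilter := hs.filter (fun z => decide (z < M))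
    have he1 : filter (fun z => decide (z < M)) [a, x, a] = [a, x, a] := by
      rw [filter_eq_self]
      intro z hz
      simp only [mem_cons, not_mem_nil, or_false] at hz
      rcases hz with rfl | rfl | rfl <;> simp <;> omega
    have f1 : filter (fun z => decide (z < M)) u₁ = u₁ :=
      filter_eq_self.mpr (fun z hz => by simpa using h₁ z hz)
    have f2 : filter (fun z => decide (z < M)) u₂ = u₂ :=
      filter_eq_self.mpr (fun z hz => by simpa using h₂ z hz)
    have f3 : filter (fun z => decide (z < M)) (replicate m M) = [] :=
      filter_eq_nil_iff.mpr (fun z hz => by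
        have := eq_of_mem_replicate hz; simp [this])
    have he2 : filter (fun z => decide (z < M)) (u₁ ++ (replicate m M ++ u₂)) = u₁ ++ u₂ := by
      rw [filter_append, filter_append, f1, f2, f3]
      simp
    rw [he1, he2] at hfilter
    exact hfilter

lemma patB_recon {u₁ u₂ : List ℕ} {M k : ℕ}
    (h₁ : ∀ z ∈ u₁, z < M) (h₂ : ∀ z ∈ u₂, z < M)
    (hav : ¬ pat110 (u₁ ++ u₂)) :
    ¬ pat110 (u₁ ++ [M] ++ u₂ ++ replicate k M) := by
  rintro ⟨a, x, hx, hs⟩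
  rw [append_assoc, append_assoc] at hs
  by_cases ha : a = M
  · rw [ha] at hx hs
    obtain ⟨l₁, l₂, h12, hsl₁, hsl₂⟩ := sublist_append_iff.mp hs
    have hl₁ : l₁ = [] := by
      cases l₁ with
      | nil => rfl
      | cons c t =>
        rw [cons_append] at h12
        injection h12 with hc _
        exact absurd (h₁ c (hsl₁.subset (mem_cons_self))) (by omega)
    rw [hl₁, nil_append] at h12; rw [← h12] at hsl₂
    obtain ⟨l₃, l₄, h34, hsl₃, hsl₄⟩ := sublist_append_iff.mp hsl₂
    -- l₃ <+ [M]
    obtain ⟨l₅, l₆, h56, hsl₅, hsl₆⟩ := sublist_append_iff.mp hsl₄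
    have h5lt : ∀ z ∈ l₅, z < M := fun z hz => h₂ _ (hsl₅.subset hz)
    have h6M : ∀ z ∈ l₆, z = M := fun z hz => eq_of_mem_replicate (hsl₆.subset hz)
    -- combined : [M,M,x] = l₃ ++ l₅ ++ l₆ with l₃ ∈ {[],[M]}, l₅ all < M, l₆ all = M
    have hxl : x ≠ M := by omega
    rcases sublist_singleton' hsl₃ with h3 | h3 <;> subst h3
    · -- [M,M,x] = l₅ ++ l₆
      rw [nil_append, h56] at h34
      cases l₅ with
      | nil =>
        rw [nil_append] at h34
        have : x ∈ l₆ := by rw [← h34]; simp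
        exact hxl (h6M x this)
      | cons c t =>
        rw [cons_append] at h34
        injection h34 with hc _
        exact absurd (h5lt c (mem_cons_self)) (by omega)
    · -- [M,M,x] = M :: (l₅ ++ l₆)
      rw [h56, cons_append, nil_append] at h34
      injection h34 with _ h34'
      cases l₅ with
      | nil =>
        rw [nil_append] at h34'
        have : x ∈ l₆ := by rw [← h34']; simp
        exact hxl (h6M x this)
      | cons c t =>
        rw [cons_append] at h34'
        injection h34' with hc _
        exact absurd (h5lt c (mem_cons_self)) (by omega)
  · have haM : a < M := by
      have hmem : a ∈ u₁ ++ ([M] ++ (u₂ ++ replicate k M)) := hs.subset (mem_cons_self)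
      rcases mem_append.mp hmem with h | h
      · exact h₁ a h
      · rcases mem_append.mp h with h' | h'
        · simp only [mem_singleton] at h'; exact absurd h' ha
        · rcases mem_append.mp h' with h'' | h''
          · exact h₂ a h''
          · exact absurd (eq_of_mem_replicate h'') ha
    apply hav
    refine ⟨a, x, hx, ?_⟩
    have hfilter := hs.filter (fun z => decide (z < M))
    have he1 : filter (fun z => decide (z < M)) [a, a, x] = [a, a, x] := by
      rw [filter_eq_self]
      intro z hz
      simp only [mem_cons, not_mem_nil, or_false] at hz
      rcases hz with rfl | rfl | rfl <;> simp <;> omega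
    have f1 : filter (fun z => decide (z < M)) u₁ = u₁ :=
      filter_eq_self.mpr (fun z hz => by simpa using h₁ z hz)
    have f2 : filter (fun z => decide (z < M)) u₂ = u₂ :=
      filter_eq_self.mpr (fun z hz => by simpa using h₂ z hz)
    have f3 : filter (fun z => decide (z < M)) (replicate k M) = [] :=
      filter_eq_nil_iff.mpr (fun z hz => by
        have := eq_of_mem_replicate hz; simp [this])
    have f4 : filter (fun z => decide (z < M)) [M] = [] :=
      filter_eq_nil_iff.mpr (fun z hz => by
        simp only [mem_singleton] at hz; simp [hz])
    have he2 : filter (fun z => decide (z < M)) (u₁ ++ ([M] ++ (u₂ ++ replicate k M))) = u₁ ++ u₂ := by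
      rw [filter_append, filter_append, filter_append, f1, f2, f3, f4]
      simp
    rw [he1, he2] at hfilter
    exact hfilter

end Part4
section Part5
open List

def reconA (t : ℕ × ℕ × ℕ) (w : List ℕ) : List ℕ :=
  take t.2.2 w ++ replicate t.2.1 t.1 ++ drop t.2.2 w

lemma pat101_nil : ¬ pat101 ([] : List ℕ) := by
  rintro ⟨a, x, _, hs⟩
  simpa using hs.length_le

lemma pat110_nil : ¬ pat110 ([] : List ℕ) := by
  rintro ⟨a, x, _, hs⟩
  simpa using hs.length_le

lemma replicate_cons' {m M : ℕ} (h : 1 ≤ m) : replicate m M = M :: replicate (m-1) M := by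
  cases m with
  | zero => omega
  | succ k => rw [replicate_succ]; rfl

-- facts about a 101-avoider that we decompose
lemma decA_facts {b e : List ℕ} (hs : Pairwise (· ≤ ·) b) (he : e ∈ AvA b) (hne : b ≠ []) :
    (mx e, e.count (mx e), (preL (mx e) e).length) ∈ idxS b ∧
    wA (mx e) e ∈ AvA (cvec b (mx e) (e.count (mx e))) ∧
    reconA (mx e, e.count (mx e), (preL (mx e) e).length) (wA (mx e) e) = e := by
  obtain ⟨hb, hav⟩ := mem_AvA.mp he
  have hlen : e.length = b.length := hb.length_eq
  have hene : e ≠ [] := by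
    intro h; apply hne
    rw [h] at hlen; exact (length_eq_zero_iff.mp hlen.symm)
  set M := mx e with hMdef
  set n := b.length with hndef
  have hM : M ∈ e := mx_mem hene
  have hle : ∀ x ∈ e, x ≤ M := fun x hx => le_mx hx
  obtain ⟨hstruct, hMQ⟩ := struct101 hav hle hM
  set m := e.count M with hmdef
  set P := preL M e with hPdef
  set Q := tailQ M e with hQdef
  set p := P.length with hpdef
  have hMP : M ∉ P := not_mem_preL
  have hm1 : 1 ≤ m := count_pos_iff.mpr hM
  have hlens : p + m + Q.length = n := by
    have := congrArg length hstruct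
    simp only [length_append, length_replicate] at this
    omega
  have hMmx : M ≤ mx b := by
    obtain ⟨y, hy, hMy⟩ := forall₂_mem_left hb hM
    exact le_trans hMy (le_mx hy)
  have hpn : p < n := by omega
  -- M ≤ b[p]
  have hdropp : drop p e = replicate m M ++ Q := by
    conv_lhs => rw [hstruct, append_assoc]
    exact drop_left' rfl
  have hbp : M ≤ b[p]'hpn := by
    have h1 : Forall₂ (· ≤ ·) (drop p e) (drop p b) := forall₂_drop p hb
    rw [hdropp, replicate_cons' hm1, cons_append,
      drop_eq_getElem_cons hpn] at h1
    cases h1 with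
    | cons hrel _ => exact hrel
  have hp0 : p0 b M ≤ p := p0_le_of_ge hpn hbp
  have hM0 : M = 0 → m = n := by
    intro h0
    rw [hmdef, ← hlen]
    apply count_eq_length.mpr
    intro x hx
    have := hle x hx; omega
  have hPe : ∀ x ∈ P, x < M := by
    intro x hx
    have hxe : x ∈ e := by rw [hstruct]; simp [hx]
    exact lt_of_le_of_ne (hle x hxe) (fun h => hMP (h ▸ hx))
  have hQe : ∀ x ∈ Q, x < M := by
    intro x hx
    have hxe : x ∈ e := by rw [hstruct]; simp [hx]
    exact lt_of_le_of_ne (hle x hxe) (fun h => hMQ (h ▸ hx))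
  have htake : take p e = P := by
    conv_lhs => rw [hstruct, append_assoc]
    exact take_left' rfl
  refine ⟨mem_idxS'.mpr ⟨hMmx, hm1, hp0, by omega, hM0⟩, ?_, ?_⟩
  · rw [mem_AvA]
    constructor
    · -- bounds for w = P ++ Q
      rw [wA, ← hPdef, ← hQdef, cvec]
      have hsplitP : P ++ Q = take (p0 b M) P ++ (drop (p0 b M) P ++ Q) := by
        rw [← append_assoc, take_append_drop]
      rw [hsplitP]
      apply forall₂_append'
      · have h1 : take (p0 b M) P = take (p0 b M) e := by
          rw [← htake, take_take, min_eq_left hp0]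
        rw [h1, takeWhile_lt_eq_take]
        exact forall₂_take _ hb
      · have hlen2 : (drop (p0 b M) P ++ Q).length = n - m - p0 b M := by
          simp only [length_append, length_drop]
          omega
        have hall : ∀ x ∈ drop (p0 b M) P ++ Q, x ≤ M - 1 := by
          intro x hx
          rcases mem_append.mp hx with h | h
          · have := hPe x (drop_subset _ _ h); omega
          · have := hQe x h; omega
        have := forall₂_le_replicate_right hall
        rw [hlen2] at this
        exact this
    · -- avoidance for w
      intro hpat
      apply hav
      apply pat101_sublist _ hpat
      conv_rhs => rw [hstruct, append_assoc]
      exact (sublist_append_right _ _).append_left P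
  · -- recon ∘ dec = id
    rw [reconA, wA, ← hPdef, ← hQdef]
    rw [take_left' rfl, drop_left' rfl]
    exact hstruct.symm

lemma reconA_facts {b : List ℕ} {M m p : ℕ} {w : List ℕ} (hs : Pairwise (· ≤ ·) b)
    (hne : b ≠ []) (ht : (M, m, p) ∈ idxS b) (hw : w ∈ AvA (cvec b M m)) :
    reconA (M, m, p) w ∈ AvA b ∧
    (mx (reconA (M, m, p) w), (reconA (M, m, p) w).count (mx (reconA (M, m, p) w)),
      (preL (mx (reconA (M, m, p) w)) (reconA (M, m, p) w)).length) = (M, m, p) ∧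
    wA (mx (reconA (M, m, p) w)) (reconA (M, m, p) w) = w := by
  obtain ⟨hMmx, hm1, hp0, hpm, hM0⟩ := mem_idxS'.mp ht
  obtain ⟨hwb, hwav⟩ := mem_AvA.mp hw
  set n := b.length with hndef
  have hn1 : 1 ≤ n := by
    cases b with
    | nil => exact absurd rfl hne
    | cons _ _ => simp [hndef]
  have hwlen : w.length = n - m := by
    rw [hwb.length_eq, length_cvec]
    omega
  have hplen : p ≤ w.length := by omega
  rcases Nat.eq_zero_or_pos M with hM0' | hMpos
  · -- M = 0 case
    have hmn : m = n := hM0 hM0'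
    have hw0 : w = [] := by
      rw [← length_eq_zero_iff, hwlen, hmn]; omega
    have hp0' : p = 0 := by omega
    subst hM0' hw0 hp0'
    have hu : reconA (0, m, 0) [] = replicate m 0 := by
      simp [reconA]
    rw [hu]
    have havrep : ¬ pat101 (replicate m 0) := by
      have := patA_recon (u₁ := []) (u₂ := []) (M := 0) (m := m)
        (by simp) (by simp) (by simpa using pat101_nil)
      simpa using this
    have hmem : replicate m 0 ∈ AvA b := by
      rw [mem_AvA]
      refine ⟨?_, havrep⟩
      have h := forall₂_le_replicate_left (r := b) (K := 0) (fun y _ => Nat.zero_le y)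
      have hlen' : b.length = m := by omega
      rw [hlen'] at h
      exact h
    refine ⟨hmem, ?_, ?_⟩
    · have hmx : mx (replicate m 0) = 0 := by
        rw [mx_replicate (by omega)]
      rw [hmx]
      have hcnt : (replicate m 0).count 0 = m := by
        simp [count_replicate]
      have hpre : preL 0 (replicate m 0) = [] := by
        rw [preL, replicate_cons' (by omega : 1 ≤ m), takeWhile_cons]
        simp
      rw [hcnt, hpre]
      simp
    · have hmx : mx (replicate m 0) = 0 := by
        rw [mx_replicate (by omega)]
      rw [hmx, wA]
      have hpre : preL 0 (replicate m 0) = [] := by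
        rw [preL, replicate_cons' (by omega : 1 ≤ m), takeWhile_cons]
        simp
      have hrest : restL 0 (replicate m 0) = replicate m 0 := by
        rw [restL, replicate_cons' (by omega : 1 ≤ m), dropWhile_cons]
        simp [← replicate_cons' (by omega : 1 ≤ m)]
      have htl : tailQ 0 (replicate m 0) = [] := by
        rw [tailQ, hrest]
        apply dropWhile_eq_nil_iff.mpr
        intro x hx
        simp [eq_of_mem_replicate hx]
      rw [hpre, htl]
      rfl
  · -- M ≥ 1 case
    have hwlt : ∀ x ∈ w, x < M := fun x hx => lt_of_forall₂_le_cvec hwb hMpos hx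
    have htlt : ∀ x ∈ take p w, x < M := fun x hx => hwlt x (take_subset _ _ hx)
    have hdlt : ∀ x ∈ drop p w, x < M := fun x hx => hwlt x (drop_subset _ _ hx)
    have hu : reconA (M, m, p) w = take p w ++ replicate m M ++ drop p w := rfl
    -- membership in AvA b
    have hbounds : Forall₂ (· ≤ ·) (reconA (M, m, p) w) b := by
      rw [hu]
      have hwdel : Forall₂ (· ≤ ·) w (take p b ++ drop (p + m) b) :=
        forall₂_le_trans hwb (cvec_le_delA hs hp0 hm1 hpm)
      have htb : (take p b).length = p := by simp; omega
      have h1 : Forall₂ (· ≤ ·) (take p w) (take p b) := by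
        have := forall₂_take p hwdel
        rw [take_left' htb] at this
        exact this
      have h2 : Forall₂ (· ≤ ·) (drop p w) (drop (p + m) b) := by
        have := forall₂_drop p hwdel
        rw [drop_left' htb] at this
        exact this
      have h3 : Forall₂ (· ≤ ·) (replicate m M) (take m (drop p b)) :=
        replicate_le_seg hs hp0 hpm
      have hre : take p b ++ take m (drop p b) ++ drop (p + m) b = b := by
        rw [append_assoc]
        have : take m (drop p b) ++ drop (p + m) b = drop p b := by
          have hd : drop (p + m) b = drop m (drop p b) := by
            rw [drop_drop]
          rw [hd, take_append_drop]
        rw [this, take_append_drop]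
      rw [← hre]
      exact forall₂_append' (forall₂_append' h1 h3) h2
    have havu : ¬ pat101 (reconA (M, m, p) w) := by
      rw [hu]
      apply patA_recon htlt hdlt
      rw [take_append_drop]
      exact hwav
    -- computation of the decomposition data
    have hmxu : mx (reconA (M, m, p) w) = M := by
      rw [hu, mx_append, mx_append, mx_replicate hm1]
      have t1 : mx (take p w) ≤ M := mx_le (fun x hx => le_of_lt (htlt x hx))
      have t2 : mx (drop p w) ≤ M := mx_le (fun x hx => le_of_lt (hdlt x hx))
      omega
    have hcnt : (reconA (M, m, p) w).count M = m := by
      rw [hu, count_append, count_append, count_replicate,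
        count_eq_zero.mpr (fun h => lt_irrefl M (htlt M h)),
        count_eq_zero.mpr (fun h => lt_irrefl M (hdlt M h))]
      simp
    have hpre : preL M (reconA (M, m, p) w) = take p w := by
      rw [hu, preL, append_assoc]
      rw [takeWhile_append_all (fun x hx => by
        simp only [decide_eq_true_iff]
        exact fun h => lt_irrefl M (h ▸ htlt x hx))]
      rw [replicate_cons' hm1, cons_append, takeWhile_cons]
      simp
    have hrest : restL M (reconA (M, m, p) w) = replicate m M ++ drop p w := by
      rw [hu, restL, append_assoc]
      rw [dropWhile_append_all (fun x hx => by
        simp only [decide_eq_true_iff]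
        exact fun h => lt_irrefl M (h ▸ htlt x hx))]
      rw [replicate_cons' hm1, cons_append, dropWhile_cons]
      simp [← replicate_cons' hm1]
    have htlq : tailQ M (reconA (M, m, p) w) = drop p w := by
      rw [tailQ, hrest]
      rw [dropWhile_append_all (fun x hx => by
        simp only [decide_eq_true_iff]
        exact eq_of_mem_replicate hx)]
      cases hd : drop p w with
      | nil => simp
      | cons c l =>
        rw [dropWhile_cons, if_neg]
        have : c < M := hdlt c (by rw [hd]; exact mem_cons_self)
        simp; omega
    refine ⟨mem_AvA.mpr ⟨hbounds, havu⟩, ?_, ?_⟩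
    · rw [hmxu, hcnt, hpre, length_take]
      simp [Prod.ext_iff]
      omega
    · rw [hmxu, wA, hpre, htlq, take_append_drop]

lemma cardA_sum (b : List ℕ) (hs : Pairwise (· ≤ ·) b) (hne : b ≠ []) :
    (AvA b).card = ∑ t ∈ idxS b, (AvA (cvec b t.1 t.2.1)).card := by
  rw [← Finset.card_sigma]
  refine Finset.card_bij'
    (fun e _ => ⟨(mx e, e.count (mx e), (preL (mx e) e).length), wA (mx e) e⟩)
    (fun tw _ => reconA tw.1 tw.2) ?_ ?_ ?_ ?_
  · intro e he
    obtain ⟨h1, h2, _⟩ := decA_facts hs he hne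
    exact Finset.mem_sigma.mpr ⟨h1, h2⟩
  · rintro ⟨⟨M, m, p⟩, w⟩ htw
    obtain ⟨h1, h2⟩ := Finset.mem_sigma.mp htw
    exact (reconA_facts hs hne h1 h2).1
  · intro e he
    exact (decA_facts hs he hne).2.2
  · rintro ⟨⟨M, m, p⟩, w⟩ htw
    obtain ⟨h1, h2⟩ := Finset.mem_sigma.mp htw
    obtain ⟨_, hA, hB⟩ := reconA_facts hs hne h1 h2
    exact Sigma.ext hA (heq_of_eq hB)

end Part5
section Part6
open List

def reconB (t : ℕ × ℕ × ℕ) (w : List ℕ) : List ℕ :=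
  take t.2.2 w ++ [t.1] ++ drop t.2.2 w ++ replicate (t.2.1 - 1) t.1

lemma decB_facts {b e : List ℕ} (hs : Pairwise (· ≤ ·) b) (he : e ∈ AvB b) (hne : b ≠ []) :
    (mx e, e.count (mx e), (preL (mx e) e).length) ∈ idxS b ∧
    wB (mx e) e ∈ AvB (cvec b (mx e) (e.count (mx e))) ∧
    reconB (mx e, e.count (mx e), (preL (mx e) e).length) (wB (mx e) e) = e := by
  obtain ⟨hb, hav⟩ := mem_AvB.mp he
  have hlen : e.length = b.length := hb.length_eq
  have hene : e ≠ [] := by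
    intro h; apply hne
    rw [h] at hlen; exact (length_eq_zero_iff.mp hlen.symm)
  set M := mx e with hMdef
  set n := b.length with hndef
  have hM : M ∈ e := mx_mem hene
  have hle : ∀ x ∈ e, x ≤ M := fun x hx => le_mx hx
  obtain ⟨hstruct, hMW, hm1⟩ := struct110 hav hle hM
  set m := e.count M with hmdef
  set P := preL M e with hPdef
  set W := midW M e with hWdef
  set p := P.length with hpdef
  have hMP : M ∉ P := not_mem_preL
  have hlens : p + m + W.length = n := by
    have := congrArg length hstruct
    simp only [length_append, length_replicate, length_cons, length_nil] at this
    omega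
  have hMmx : M ≤ mx b := by
    obtain ⟨y, hy, hMy⟩ := forall₂_mem_left hb hM
    exact le_trans hMy (le_mx hy)
  have hpn : p < n := by omega
  have hdropp : drop p e = [M] ++ (W ++ replicate (m - 1) M) := by
    conv_lhs => rw [hstruct]
    rw [append_assoc, append_assoc]
    exact drop_left' rfl
  have hbp : M ≤ b[p]'hpn := by
    have h1 : Forall₂ (· ≤ ·) (drop p e) (drop p b) := forall₂_drop p hb
    rw [hdropp, singleton_append, drop_eq_getElem_cons hpn] at h1
    cases h1 with
    | cons hrel _ => exact hrel
  have hp0 : p0 b M ≤ p := p0_le_of_ge hpn hbp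
  have hM0 : M = 0 → m = n := by
    intro h0
    rw [hmdef, ← hlen]
    apply count_eq_length.mpr
    intro x hx
    have := hle x hx; omega
  have hPe : ∀ x ∈ P, x < M := by
    intro x hx
    have hxe : x ∈ e := by rw [hstruct]; simp [hx]
    exact lt_of_le_of_ne (hle x hxe) (fun h => hMP (h ▸ hx))
  have hWe : ∀ x ∈ W, x < M := by
    intro x hx
    have hxe : x ∈ e := by rw [hstruct]; simp [hx]
    exact lt_of_le_of_ne (hle x hxe) (fun h => hMW (h ▸ hx))
  have htake : take p e = P := by
    conv_lhs => rw [hstruct]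
    rw [append_assoc, append_assoc]
    exact take_left' rfl
  refine ⟨mem_idxS'.mpr ⟨hMmx, hm1, hp0, by omega, hM0⟩, ?_, ?_⟩
  · rw [mem_AvB]
    constructor
    · rw [wB, ← hPdef, ← hWdef, cvec]
      have hsplitP : P ++ W = take (p0 b M) P ++ (drop (p0 b M) P ++ W) := by
        rw [← append_assoc, take_append_drop]
      rw [hsplitP]
      apply forall₂_append'
      · have h1 : take (p0 b M) P = take (p0 b M) e := by
          rw [← htake, take_take, min_eq_left hp0]
        rw [h1, takeWhile_lt_eq_take]
        exact forall₂_take _ hb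
      · have hlen2 : (drop (p0 b M) P ++ W).length = n - m - p0 b M := by
          simp only [length_append, length_drop]
          omega
        have hall : ∀ x ∈ drop (p0 b M) P ++ W, x ≤ M - 1 := by
          intro x hx
          rcases mem_append.mp hx with h | h
          · have := hPe x (drop_subset _ _ h); omega
          · have := hWe x h; omega
        have := forall₂_le_replicate_right hall
        rw [hlen2] at this
        exact this
    · intro hpat
      apply hav
      apply pat110_sublist _ hpat
      conv_rhs => rw [hstruct, append_assoc, append_assoc, singleton_append]
      exact ((sublist_append_left W _).cons M).append_left P
  · rw [reconB, wB, ← hPdef, ← hWdef]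
    rw [take_left' rfl, drop_left' rfl]
    exact hstruct.symm

lemma reconB_facts {b : List ℕ} {M m p : ℕ} {w : List ℕ} (hs : Pairwise (· ≤ ·) b)
    (hne : b ≠ []) (ht : (M, m, p) ∈ idxS b) (hw : w ∈ AvB (cvec b M m)) :
    reconB (M, m, p) w ∈ AvB b ∧
    (mx (reconB (M, m, p) w), (reconB (M, m, p) w).count (mx (reconB (M, m, p) w)),
      (preL (mx (reconB (M, m, p) w)) (reconB (M, m, p) w)).length) = (M, m, p) ∧
    wB (mx (reconB (M, m, p) w)) (reconB (M, m, p) w) = w := by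
  obtain ⟨hMmx, hm1, hp0, hpm, hM0⟩ := mem_idxS'.mp ht
  obtain ⟨hwb, hwav⟩ := mem_AvB.mp hw
  set n := b.length with hndef
  have hn1 : 1 ≤ n := by
    cases b with
    | nil => exact absurd rfl hne
    | cons _ _ => simp [hndef]
  have hwlen : w.length = n - m := by
    rw [hwb.length_eq, length_cvec]
    omega
  have hplen : p ≤ w.length := by omega
  rcases Nat.eq_zero_or_pos M with hM0' | hMpos
  · -- M = 0 case
    have hmn : m = n := hM0 hM0'
    have hw0 : w = [] := by
      rw [← length_eq_zero_iff, hwlen, hmn]; omega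
    have hp0' : p = 0 := by omega
    subst hM0' hw0 hp0'
    have hu : reconB (0, m, 0) [] = replicate m 0 := by
      simp [reconB, replicate_cons' hm1]
    rw [hu]
    have havrep : ¬ pat110 (replicate m 0) := by
      have := patB_recon (u₁ := []) (u₂ := []) (M := 0) (k := m - 1)
        (by simp) (by simp) (by simpa using pat110_nil)
      simpa [← replicate_cons' hm1] using this
    have hmem : replicate m 0 ∈ AvB b := by
      rw [mem_AvB]
      refine ⟨?_, havrep⟩
      have h := forall₂_le_replicate_left (r := b) (K := 0) (fun y _ => Nat.zero_le y)
      have hlen' : b.length = m := by omega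
      rw [hlen'] at h
      exact h
    have hmx : mx (replicate m 0) = 0 := mx_replicate (by omega)
    have hpre : preL 0 (replicate m 0) = [] := by
      rw [preL, replicate_cons' (by omega : 1 ≤ m), takeWhile_cons]
      simp
    refine ⟨hmem, ?_, ?_⟩
    · have hcnt : (replicate m 0).count 0 = m := by
        simp [count_replicate]
      rw [hmx, hcnt, hpre]
      simp
    · rw [hmx, wB]
      have hrest : restL 0 (replicate m 0) = replicate m 0 := by
        rw [restL, replicate_cons' (by omega : 1 ≤ m), dropWhile_cons]
        simp [← replicate_cons' (by omega : 1 ≤ m)]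
      have htl : midW 0 (replicate m 0) = [] := by
        rw [midW, hrest]
        rw [replicate_cons' (by omega : 1 ≤ m)]
        show takeWhile _ (replicate (m-1) 0) = []
        cases h : replicate (m-1) 0 with
        | nil => rfl
        | cons c l =>
          have : c = 0 := eq_of_mem_replicate (h ▸ (mem_cons_self (a := c) (l := l)))
          rw [takeWhile_cons, if_neg (by simp [this])]
      rw [hpre, htl]
      rfl
  · -- M ≥ 1 case
    have hwlt : ∀ x ∈ w, x < M := fun x hx => lt_of_forall₂_le_cvec hwb hMpos hx
    have htlt : ∀ x ∈ take p w, x < M := fun x hx => hwlt x (take_subset _ _ hx)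
    have hdlt : ∀ x ∈ drop p w, x < M := fun x hx => hwlt x (drop_subset _ _ hx)
    have hu : reconB (M, m, p) w = take p w ++ [M] ++ drop p w ++ replicate (m-1) M := rfl
    have hpn : p < n := by omega
    have hbp : M ≤ b[p]'hpn := by
      have hj : p - p0 b M < (drop (p0 b M) b).length := by simp; omega
      have hmem : (drop (p0 b M) b)[p - p0 b M]'hj ∈ drop (p0 b M) b := getElem_mem _
      have heq : (drop (p0 b M) b)[p - p0 b M]'hj = b[p]'hpn := by
        rw [getElem_drop]
        congr 1
        omega
      rw [heq] at hmem
      exact mem_drop_p0_ge hs hmem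
    have hbounds : Forall₂ (· ≤ ·) (reconB (M, m, p) w) b := by
      rw [hu]
      have hwdel : Forall₂ (· ≤ ·) w (take p b ++ take (n - m - p) (drop (p + 1) b)) :=
        forall₂_le_trans hwb (cvec_le_delB hs hp0 hm1 hpm)
      have htb : (take p b).length = p := by simp; omega
      have h1 : Forall₂ (· ≤ ·) (take p w) (take p b) := by
        have := forall₂_take p hwdel
        rw [take_left' htb] at this
        exact this
      have h2 : Forall₂ (· ≤ ·) (drop p w) (take (n - m - p) (drop (p + 1) b)) := by
        have := forall₂_drop p hwdel
        rw [drop_left' htb] at this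
        exact this
      have h3 : Forall₂ (· ≤ ·) [M] [b[p]'hpn] := Forall₂.cons hbp Forall₂.nil
      have h4 : Forall₂ (· ≤ ·) (replicate (m-1) M) (drop (n - m + 1) b) :=
        replicate_le_dropseg hs (by omega) (by omega)
      have hre : take p b ++ [b[p]'hpn] ++ take (n - m - p) (drop (p + 1) b) ++ drop (n - m + 1) b = b := by
        have e1 : drop (n - m - p) (drop (p + 1) b) = drop (n - m + 1) b := by
          rw [drop_drop]; congr 1; omega
        have e2 : take (n - m - p) (drop (p + 1) b) ++ drop (n - m + 1) b = drop (p + 1) b := by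
          rw [← e1, take_append_drop]
        rw [append_assoc, append_assoc, e2, singleton_append,
          ← drop_eq_getElem_cons hpn, take_append_drop]
      rw [← hre]
      exact forall₂_append' (forall₂_append' (forall₂_append' h1 h3) h2) h4
    have havu : ¬ pat110 (reconB (M, m, p) w) := by
      rw [hu]
      apply patB_recon htlt hdlt
      rw [take_append_drop]
      exact hwav
    have hassoc : reconB (M, m, p) w = take p w ++ ([M] ++ (drop p w ++ replicate (m-1) M)) := by
      rw [hu]; simp [append_assoc]
    have hmxu : mx (reconB (M, m, p) w) = M := by
      rw [hassoc, mx_append, mx_append, mx_append]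
      have t1 : mx (take p w) ≤ M := mx_le (fun x hx => le_of_lt (htlt x hx))
      have t2 : mx (drop p w) ≤ M := mx_le (fun x hx => le_of_lt (hdlt x hx))
      have t3 : mx (replicate (m-1) M) ≤ M := mx_le (fun x hx => le_of_eq (eq_of_mem_replicate hx))
      have t4 : mx [M] = M := by simp [mx]
      omega
    have hcnt : (reconB (M, m, p) w).count M = m := by
      rw [hassoc, count_append, count_append, count_append, count_replicate,
        count_eq_zero.mpr (fun h => lt_irrefl M (htlt M h)),
        count_eq_zero.mpr (fun h => lt_irrefl M (hdlt M h))]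
      simp [count_singleton]
      omega
    have hpre : preL M (reconB (M, m, p) w) = take p w := by
      rw [hassoc, preL]
      rw [takeWhile_append_all (fun x hx => by
        simp only [decide_eq_true_iff]
        exact fun h => lt_irrefl M (h ▸ htlt x hx))]
      rw [singleton_append, takeWhile_cons]
      simp
    have hrest : restL M (reconB (M, m, p) w) = M :: (drop p w ++ replicate (m-1) M) := by
      rw [hassoc, restL]
      rw [dropWhile_append_all (fun x hx => by
        simp only [decide_eq_true_iff]
        exact fun h => lt_irrefl M (h ▸ htlt x hx))]
      rw [singleton_append, dropWhile_cons]
      simp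
    have hmid : midW M (reconB (M, m, p) w) = drop p w := by
      rw [midW, hrest]
      show takeWhile _ (drop p w ++ replicate (m-1) M) = drop p w
      rw [takeWhile_append_all (fun x hx => by
        simp only [decide_eq_true_iff]
        exact fun h => lt_irrefl M (h ▸ hdlt x hx))]
      have : takeWhile (fun x => decide (x ≠ M)) (replicate (m-1) M) = [] := by
        cases h : replicate (m-1) M with
        | nil => rfl
        | cons c l =>
          have : c = M := eq_of_mem_replicate (h ▸ (mem_cons_self (a := c) (l := l)))
          rw [takeWhile_cons, if_neg (by simp [this])]
      rw [this, append_nil]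
    refine ⟨mem_AvB.mpr ⟨hbounds, havu⟩, ?_, ?_⟩
    · rw [hmxu, hcnt, hpre, length_take]
      simp [Prod.ext_iff]
      omega
    · rw [hmxu, wB, hpre, hmid, take_append_drop]

lemma cardB_sum (b : List ℕ) (hs : Pairwise (· ≤ ·) b) (hne : b ≠ []) :
    (AvB b).card = ∑ t ∈ idxS b, (AvB (cvec b t.1 t.2.1)).card := by
  rw [← Finset.card_sigma]
  refine Finset.card_bij'
    (fun e _ => ⟨(mx e, e.count (mx e), (preL (mx e) e).length), wB (mx e) e⟩)
    (fun tw _ => reconB tw.1 tw.2) ?_ ?_ ?_ ?_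
  · intro e he
    obtain ⟨h1, h2, _⟩ := decB_facts hs he hne
    exact Finset.mem_sigma.mpr ⟨h1, h2⟩
  · rintro ⟨⟨M, m, p⟩, w⟩ htw
    obtain ⟨h1, h2⟩ := Finset.mem_sigma.mp htw
    exact (reconB_facts hs hne h1 h2).1
  · intro e he
    exact (decB_facts hs he hne).2.2
  · rintro ⟨⟨M, m, p⟩, w⟩ htw
    obtain ⟨h1, h2⟩ := Finset.mem_sigma.mp htw
    obtain ⟨_, hA, hB⟩ := reconB_facts hs hne h1 h2
    exact Sigma.ext hA (heq_of_eq hB)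

end Part6
section Part7
open List

lemma AvA_nil : AvA [] = {[]} := by
  ext l
  rw [mem_AvA, Finset.mem_singleton]
  constructor
  · rintro ⟨h, _⟩; cases h; rfl
  · rintro rfl; exact ⟨Forall₂.nil, pat101_nil⟩

lemma AvB_nil : AvB [] = {[]} := by
  ext l
  rw [mem_AvB, Finset.mem_singleton]
  constructor
  · rintro ⟨h, _⟩; cases h; rfl
  · rintro rfl; exact ⟨Forall₂.nil, pat110_nil⟩

theorem list_main (N : ℕ) : ∀ b : List ℕ, b.length ≤ N → Pairwise (· ≤ ·) b →
    (AvA b).card = (AvB b).card := by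
  induction N with
  | zero =>
    intro b hb _
    have hbe : b = [] := by
      cases b with
      | nil => rfl
      | cons _ _ => simp at hb
    rw [hbe, AvA_nil, AvB_nil]
  | succ N ih =>
    intro b hb hs
    rcases eq_or_ne b [] with rfl | hne
    · rw [AvA_nil, AvB_nil]
    · rw [cardA_sum b hs hne, cardB_sum b hs hne]
      apply Finset.sum_congr rfl
      intro t ht
      obtain ⟨M, m, p⟩ := t
      obtain ⟨hMmx, hm1, hp0, hpm, _⟩ := mem_idxS'.mp ht
      dsimp only
      have hblen : 1 ≤ b.length := by
        cases b with
        | nil => exact absurd rfl hne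
        | cons _ _ => simp
      apply ih
      · rw [length_cvec]; omega
      · exact cvec_sorted hs

lemma sorted_range (n : ℕ) : Pairwise (· ≤ ·) (range n) :=
  (pairwise_lt_range (n := n)).imp le_of_lt

lemma sublist_of_three {l : List ℕ} {i j k : ℕ} (hij : i < j) (hjk : j < k) (hk : k < l.length) :
    [l[i]'(by omega), l[j]'(by omega), l[k]'hk] <+ l := by
  have hpw : Pairwise (fun x1 x2 : Fin l.length => x1 < x2)
      [⟨i, by omega⟩, ⟨j, by omega⟩, ⟨k, hk⟩] := by
    simp [pairwise_cons]
    exact ⟨⟨hij, by omega⟩, hjk⟩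
  have := map_getElem_sublist hpw
  simpa using this

lemma exists_three_of_sublist {l : List ℕ} {u v t : ℕ} (h : [u, v, t] <+ l) :
    ∃ (i j k : ℕ) (hij : i < j) (hjk : j < k) (hk : k < l.length),
      l[i]'(by omega) = u ∧ l[j]'(by omega) = v ∧ l[k]'hk = t := by
  obtain ⟨is, heq, hpw⟩ := sublist_eq_map_getElem h
  match is, heq, hpw with
  | [i, j, k], heq, hpw =>
    simp only [map_cons, map_nil, cons.injEq, and_true] at heq
    have h1 : (i : ℕ) < (j : ℕ) := (pairwise_cons.mp hpw).1 j (by simp)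
    have h2 : (j : ℕ) < (k : ℕ) :=
      (pairwise_cons.mp (pairwise_cons.mp hpw).2).1 k (by simp)
    refine ⟨i.val, j.val, k.val, h1, h2, k.isLt, ?_, ?_, ?_⟩
    · exact heq.1.symm
    · exact heq.2.1.symm
    · exact heq.2.2.symm

lemma setA_eq (n : ℕ) :
    List.ofFn '' {e : Fin n → ℕ | (∀ i : Fin n, e i ≤ (i : ℕ)) ∧
      ¬ ∃ i j k : Fin n, i < j ∧ j < k ∧ e j < e i ∧ e i = e k} = ↑(AvA (range n)) := by
  ext l
  simp only [Set.mem_image, Set.mem_setOf_eq, Finset.coe_sort_coe, Finset.mem_coe, mem_AvA]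
  constructor
  · rintro ⟨e, ⟨hbd, hpat⟩, rfl⟩
    constructor
    · rw [forall₂_iff_get]
      refine ⟨by simp, ?_⟩
      intro i h1 h2
      simp only [get_eq_getElem, List.getElem_ofFn, getElem_range]
      exact hbd _
    · rintro ⟨a, x, hx, hs⟩
      obtain ⟨i, j, k, hij, hjk, hk, hi, hj, hk'⟩ := exists_three_of_sublist hs
      apply hpat
      have hkn : k < n := by simpa using hk
      refine ⟨⟨i, by omega⟩, ⟨j, by omega⟩, ⟨k, hkn⟩, by simpa using hij, by simpa using hjk, ?_, ?_⟩
      · have h1 : e ⟨i, by omega⟩ = a := by rw [← hi]; simp [List.getElem_ofFn]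
        have h2 : e ⟨j, by omega⟩ = x := by rw [← hj]; simp [List.getElem_ofFn]
        rw [h1, h2]; exact hx
      · have h1 : e ⟨i, by omega⟩ = a := by rw [← hi]; simp [List.getElem_ofFn]
        have h3 : e ⟨k, hkn⟩ = a := by rw [← hk']; simp [List.getElem_ofFn]
        rw [h1, h3]
  · rintro ⟨hbd, hpat⟩
    have hlen : l.length = n := by
      have := hbd.length_eq; simpa using this
    refine ⟨fun i : Fin n => l[i.val]'(by omega), ⟨?_, ?_⟩, ?_⟩
    · intro i
      have h := (forall₂_iff_get.mp hbd).2 i.val (by omega) (by simp [i.isLt])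
      simpa using h
    · rintro ⟨i, j, k, hij, hjk, hlt, heq⟩
      dsimp only at hlt heq
      apply hpat
      have hs := sublist_of_three (l := l) (i := i.val) (j := j.val) (k := k.val)
        hij hjk (by omega)
      rw [← heq] at hs
      exact ⟨l[i.val]'(by omega), l[j.val]'(by omega), hlt, hs⟩
    · apply List.ext_getElem
      · simp [hlen]
      · intro i h1 h2
        simp [List.getElem_ofFn]

lemma setB_eq (n : ℕ) :
    List.ofFn '' {e : Fin n → ℕ | (∀ i : Fin n, e i ≤ (i : ℕ)) ∧
      ¬ ∃ i j k : Fin n, i < j ∧ j < k ∧ e i = e j ∧ e k < e j} = ↑(AvB (range n)) := by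
  ext l
  simp only [Set.mem_image, Set.mem_setOf_eq, Finset.coe_sort_coe, Finset.mem_coe, mem_AvB]
  constructor
  · rintro ⟨e, ⟨hbd, hpat⟩, rfl⟩
    constructor
    · rw [forall₂_iff_get]
      refine ⟨by simp, ?_⟩
      intro i h1 h2
      simp only [get_eq_getElem, List.getElem_ofFn, getElem_range]
      exact hbd _
    · rintro ⟨a, x, hx, hs⟩
      obtain ⟨i, j, k, hij, hjk, hk, hi, hj, hk'⟩ := exists_three_of_sublist hs
      apply hpat
      have hkn : k < n := by simpa using hk
      refine ⟨⟨i, by omega⟩, ⟨j, by omega⟩, ⟨k, hkn⟩, by simpa using hij, by simpa using hjk, ?_, ?_⟩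
      · have h1 : e ⟨i, by omega⟩ = a := by rw [← hi]; simp [List.getElem_ofFn]
        have h2 : e ⟨j, by omega⟩ = a := by rw [← hj]; simp [List.getElem_ofFn]
        rw [h1, h2]
      · have h2 : e ⟨j, by omega⟩ = a := by rw [← hj]; simp [List.getElem_ofFn]
        have h3 : e ⟨k, hkn⟩ = x := by rw [← hk']; simp [List.getElem_ofFn]
        rw [h2, h3]; exact hx
  · rintro ⟨hbd, hpat⟩
    have hlen : l.length = n := by
      have := hbd.length_eq; simpa using this
    refine ⟨fun i : Fin n => l[i.val]'(by omega), ⟨?_, ?_⟩, ?_⟩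
    · intro i
      have h := (forall₂_iff_get.mp hbd).2 i.val (by omega) (by simp [i.isLt])
      simpa using h
    · rintro ⟨i, j, k, hij, hjk, heq, hlt⟩
      dsimp only at heq hlt
      apply hpat
      have hs := sublist_of_three (l := l) (i := i.val) (j := j.val) (k := k.val)
        hij hjk (by omega)
      rw [show (l[j.val]'(by omega) : ℕ) = l[i.val]'(by omega) from heq.symm] at hs
      refine ⟨l[i.val]'(by omega), l[k.val]'(by omega), ?_, hs⟩
      rw [heq]; exact hlt
    · apply List.ext_getElem
      · simp [hlen]
      · intro i h1 h2
        simp [List.getElem_ofFn]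

end Part7

/-- For `n ≥ 1`, the number of inversion sequences of length `n` avoiding the
pattern 101 equals the number avoiding the pattern 110. -/
theorem inv_avoid_101_eq_avoid_110 (n : ℕ) (hn : 1 ≤ n) :
    Set.ncard {e : Fin n → ℕ | (∀ i : Fin n, e i ≤ (i : ℕ)) ∧
      ¬ ∃ i j k : Fin n, i < j ∧ j < k ∧ e j < e i ∧ e i = e k} =
    Set.ncard {e : Fin n → ℕ | (∀ i : Fin n, e i ≤ (i : ℕ)) ∧
      ¬ ∃ i j k : Fin n, i < j ∧ j < k ∧ e i = e j ∧ e k < e j} := by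
  have hA := Set.ncard_image_of_injective
    {e : Fin n → ℕ | (∀ i : Fin n, e i ≤ (i : ℕ)) ∧
      ¬ ∃ i j k : Fin n, i < j ∧ j < k ∧ e j < e i ∧ e i = e k}
    (List.ofFn_injective (n := n))
  have hB := Set.ncard_image_of_injective
    {e : Fin n → ℕ | (∀ i : Fin n, e i ≤ (i : ℕ)) ∧
      ¬ ∃ i j k : Fin n, i < j ∧ j < k ∧ e i = e j ∧ e k < e j}
    (List.ofFn_injective (n := n))
  rw [← hA, ← hB, setA_eq, setB_eq, Set.ncard_coe_finset, Set.ncard_coe_finset]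
  exact list_main (List.range n).length _ le_rfl (sorted_range n)
end
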